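/- arXiv:1206.0895 — 6 statements merged into one kernel-verified Lean document; each statement's English description precedes it below -/
import Mathlib

section
/- Consider the classical Curie–Weiss model without external field, i.e. ν = δ_0 (so P_{n,β}^h is the Gibbs measure with all h_i = 0), and let β > 1. Let m > 0 be the unique positive solution of x = tanh(βx) and set σ² = (1−m²)/(1−β(1−m²)). Fix 1/2 < α < 1. If the sequence of laws of (S_n + n m)/n^α under P_{n,β}^h satisfies a moderate deviations principle with speed n^{2α−1} and rate function x ↦ x²/(2σ²), then limsup_n (1/n^{2α−1}) ln P_{n,β}^h( |(S_n − n m)/n^α| > 1 ) = 0; in particular, the sequence of laws of (S_n − n m)/n^α does not satisfy a moderate deviations principle with speed n^{2α−1} and rate function x ↦ x²/(2σ²). -/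
open MeasureTheory ProbabilityTheory Real Filter Topology
open scoped ENNReal NNReal

noncomputable section

/-- The value of a spin encoded as a Boolean. -/
def spin (b : Bool) : ℝ := if b then 1 else -1

/-- Total magnetization of a configuration. -/
def mag {n : ℕ} (σ : Fin n → Bool) : ℝ := ∑ i, spin (σ i)

/-- Gibbs weight of a configuration in the random field Curie-Weiss model. -/
def gibbsWeight (β : ℝ) (h : ℕ → ℝ) (n : ℕ) (σ : Fin n → Bool) : ℝ :=
  Real.exp (β / (2 * n) * (mag σ) ^ 2 + β * ∑ i : Fin n, h i * spin (σ i))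

/-- The random field Curie-Weiss Gibbs measure on configurations. -/
def gibbsMeasure (β : ℝ) (h : ℕ → ℝ) (n : ℕ) : Measure (Fin n → Bool) :=
  (ENNReal.ofReal (∑ σ : Fin n → Bool, gibbsWeight β h n σ))⁻¹ •
    ∑ σ : Fin n → Bool, ENNReal.ofReal (gibbsWeight β h n σ) • Measure.dirac σ

/-- `μ` is the infinite product of `ν` over `ℕ` (characterised by finite marginals). -/
def IsProductMeasure (ν : Measure ℝ) (μ : Measure (ℕ → ℝ)) : Prop :=
  ∀ n : ℕ, μ.map (fun h (i : Fin n) => h (i : ℕ)) = Measure.pi fun _ : Fin n => ν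

/-- extended logarithm, `elog 0 = ⊥`, `elog ⊤ = ⊤`. -/
def elog (x : ℝ≥0∞) : EReal :=
  if x = 0 then ⊥ else if x = ⊤ then ⊤ else ((Real.log x.toReal : ℝ) : EReal)

/-- A sequence of measures satisfies a large deviations principle with given speed and
rate function. -/
def HasLDP (P : ℕ → Measure ℝ) (speed : ℕ → ℝ) (I : ℝ → ℝ≥0∞) : Prop :=
  LowerSemicontinuous I ∧ (∀ c : ℝ, IsCompact {x : ℝ | I x ≤ ENNReal.ofReal c}) ∧
    ∀ C : Set ℝ, MeasurableSet C →
      -(⨅ x ∈ interior C, (I x : EReal)) ≤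
          liminf (fun n => ((((speed n)⁻¹ : ℝ) : EReal)) * elog (P n C)) atTop ∧
        limsup (fun n => ((((speed n)⁻¹ : ℝ) : EReal)) * elog (P n C)) atTop ≤
          -(⨅ x ∈ closure C, (I x : EReal))

/-- The function `G` of the random field Curie-Weiss model. -/
def G (β : ℝ) (ν : Measure ℝ) (x : ℝ) : ℝ :=
  β / 2 * x ^ 2 - ∫ h, Real.log (Real.cosh (β * (x + h))) ∂ν

/-- The finite-volume function `G_n^h`. -/
def Gn (β : ℝ) (h : ℕ → ℝ) (n : ℕ) (x : ℝ) : ℝ :=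
  β / 2 * x ^ 2 - (1 / n) * ∑ i : Fin n, Real.log (Real.cosh (β * (x + h i)))

/-- `m` is a (local or global) minimum of `G` of type `k` and strength `l`. -/
def IsMinOfType (β : ℝ) (ν : Measure ℝ) (m : ℝ) (k : ℕ) (l : ℝ) : Prop :=
  1 ≤ k ∧ 0 < l ∧ (∀ i : ℕ, 1 ≤ i → i ≤ 2 * k - 1 → iteratedDeriv i (G β ν) m = 0) ∧
    iteratedDeriv (2 * k) (G β ν) m = l

/-- The height of a minimum `m` of `G`. -/
def height (β : ℝ) (ν : Measure ℝ) (m : ℝ) : ℝ := G β ν m - ⨅ w, G β ν w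

/-- The broadness of a minimum `m` of `G`. -/
def broadness (β : ℝ) (ν : Measure ℝ) (m : ℝ) : ℝ :=
  sInf ((fun y => |y - m|) '' {y | G β ν y < G β ν m})

/-- The moderate deviations rate function. -/
def mdpRate (β l : ℝ) (k : ℕ) (x : ℝ) : ℝ≥0∞ :=
  if k = 1 then ENNReal.ofReal (x ^ 2 / (2 * (l⁻¹ - β⁻¹)))
  else ENNReal.ofReal (l * x ^ (2 * k) / (Nat.factorial (2 * k)))

/-- The polynomial `P_{2k}`. -/
def P2k (l : ℝ) (k : ℕ) (s : ℝ) : ℝ :=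
  l / (2 * (Nat.factorial (2 * k))) * s ^ (2 * k) - ∑ i ∈ Finset.Icc 1 (2 * k - 1), |s| ^ i


/-! ### Auxiliary lemmas -/

lemma elog_mono' {x y : ℝ≥0∞} (h : x ≤ y) : elog x ≤ elog y := by
  rcases eq_or_ne x 0 with hx0 | hx0
  · simp [elog, hx0]
  rcases eq_or_ne y ⊤ with hyt | hyt
  · simp only [elog, hyt, if_neg (by simp : (⊤:ℝ≥0∞) ≠ 0), if_pos rfl]
    exact le_top
  have hxt : x ≠ ⊤ := fun h' => hyt (top_le_iff.1 (h' ▸ h))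
  have hy0 : y ≠ 0 := fun h' => hx0 (le_antisymm (h' ▸ h) zero_le)
  rw [elog, elog, if_neg hx0, if_neg hxt, if_neg hy0, if_neg hyt]
  exact EReal.coe_le_coe_iff.2 <| Real.log_le_log
    (ENNReal.toReal_pos hx0 hxt) (ENNReal.toReal_mono hyt h)

lemma elog_nonpos' {x : ℝ≥0∞} (h : x ≤ 1) : elog x ≤ 0 := by
  unfold elog
  split_ifs with h1 h2
  · exact bot_le
  · exact absurd (h2 ▸ h) (by simp)
  · exact EReal.coe_nonpos.2 <| Real.log_nonpos ENNReal.toReal_nonneg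
      (by simpa using ENNReal.toReal_mono (by simp) h)

lemma gibbs_univ (β : ℝ) (h : ℕ → ℝ) (n : ℕ) : gibbsMeasure β h n Set.univ = 1 := by
  classical
  have hsum : 0 < ∑ σ : Fin n → Bool, gibbsWeight β h n σ :=
    Finset.sum_pos (fun σ _ => Real.exp_pos _) Finset.univ_nonempty
  rw [gibbsMeasure, Measure.smul_apply, Measure.finset_sum_apply]
  simp only [Measure.smul_apply, measure_univ, smul_eq_mul, mul_one]
  have heq : ∑ σ : Fin n → Bool, ENNReal.ofReal (gibbsWeight β h n σ)
      = ENNReal.ofReal (∑ σ : Fin n → Bool, gibbsWeight β h n σ) :=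
    (ENNReal.ofReal_sum_of_nonneg (fun σ _ => (Real.exp_pos _).le)).symm
  rw [heq]
  exact ENNReal.inv_mul_cancel (by simp [ENNReal.ofReal_pos, hsum]) ENNReal.ofReal_ne_top

lemma gibbs_map_le_one (β : ℝ) (h : ℕ → ℝ) (n : ℕ) (f : (Fin n → Bool) → ℝ) (S : Set ℝ) :
    ((gibbsMeasure β h n).map f) S ≤ 1 := by
  calc ((gibbsMeasure β h n).map f) S ≤ ((gibbsMeasure β h n).map f) Set.univ :=
        measure_mono (Set.subset_univ _)
    _ = gibbsMeasure β h n Set.univ := by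
        rw [Measure.map_apply (measurable_of_countable _) MeasurableSet.univ]; rfl
    _ = 1 := gibbs_univ β h n

lemma curieweiss_slope (β m : ℝ) (hβ : 1 < β) (hm : 0 < m)
    (hfix : m = Real.tanh (β * m)) : β * (1 - m ^ 2) < 1 := by
  have ht : 0 < β * m := by positivity
  have hsp : 0 < Real.sinh (β * m) := Real.sinh_pos_iff.2 ht
  have hc : 1 ≤ Real.cosh (β * m) := Real.one_le_cosh (β * m)
  have hc0 : 0 < Real.cosh (β * m) := by linarith
  have hid : Real.cosh (β * m) ^ 2 - Real.sinh (β * m) ^ 2 = 1 :=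
    Real.cosh_sq_sub_sinh_sq (β * m)
  have hmc : m * Real.cosh (β * m) = Real.sinh (β * m) := by
    have hdiv : m = Real.sinh (β * m) / Real.cosh (β * m) := by
      nth_rewrite 1 [hfix]
      exact Real.tanh_eq_sinh_div_cosh _
    nth_rewrite 1 [hdiv]
    field_simp
  have hs : β * m < Real.sinh (β * m) := Real.self_lt_sinh_iff.2 ht
  have hsc : β * m < Real.sinh (β * m) * Real.cosh (β * m) := by nlinarith
  have hpos : 0 < m * Real.cosh (β * m) ^ 2 := by positivity
  have key : β * (1 - m ^ 2) * (m * Real.cosh (β * m) ^ 2)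
      < 1 * (m * Real.cosh (β * m) ^ 2) := by
    calc β * (1 - m ^ 2) * (m * Real.cosh (β * m) ^ 2)
        = (β * m) * (Real.cosh (β * m) ^ 2 - (m * Real.cosh (β * m)) ^ 2) := by ring
      _ = (β * m) * (Real.cosh (β * m) ^ 2 - Real.sinh (β * m) ^ 2) := by rw [hmc]
      _ = β * m := by rw [hid, mul_one]
      _ < Real.sinh (β * m) * Real.cosh (β * m) := hsc
      _ = 1 * (m * Real.cosh (β * m) ^ 2) := by rw [← hmc]; ring
  exact lt_of_mul_lt_mul_right key hpos.le

/-- The low-temperature Curie-Weiss counterexample (Example 3.6 of the paper). -/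
theorem low_temperature_counterexample
    (β : ℝ) (hβ : 1 < β) (m : ℝ) (hm : 0 < m) (hfix : m = Real.tanh (β * m))
    (huniq : ∀ x : ℝ, 0 < x → x = Real.tanh (β * x) → x = m)
    (s2 : ℝ) (hs2 : s2 = (1 - m ^ 2) / (1 - β * (1 - m ^ 2)))
    (α : ℝ) (hα1 : 1 / 2 < α) (hα2 : α < 1)
    (H : HasLDP
      (fun n => (gibbsMeasure β (fun _ => 0) n).map (fun σ => (mag σ + n * m) / (n : ℝ) ^ α))
      (fun n => (n : ℝ) ^ (2 * α - 1))
      (fun x => ENNReal.ofReal (x ^ 2 / (2 * s2)))) :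
    limsup (fun n : ℕ => ((((n : ℝ) ^ (2 * α - 1))⁻¹ : ℝ) : EReal) *
        elog (((gibbsMeasure β (fun _ => 0) n).map
          (fun σ => (mag σ - n * m) / (n : ℝ) ^ α)) {x : ℝ | 1 < |x|})) atTop = 0 ∧
      ¬ HasLDP
        (fun n => (gibbsMeasure β (fun _ => 0) n).map
          (fun σ => (mag σ - n * m) / (n : ℝ) ^ α))
        (fun n => (n : ℝ) ^ (2 * α - 1))
        (fun x => ENNReal.ofReal (x ^ 2 / (2 * s2))) := by
  classical
  have hm1 : m < 1 := by
    rw [hfix, Real.tanh_eq_sinh_div_cosh]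
    exact (div_lt_one (Real.cosh_pos _)).2 (Real.sinh_lt_cosh _)
  have hkey : β * (1 - m ^ 2) < 1 := curieweiss_slope β m hβ hm hfix
  have hnum : 0 < 1 - m ^ 2 := by nlinarith
  have hden : 0 < 1 - β * (1 - m ^ 2) := by linarith
  have hs2pos : 0 < s2 := hs2 ▸ div_pos hnum hden
  have hS : MeasurableSet {x : ℝ | 1 < |x|} :=
    (isOpen_lt continuous_const continuous_abs).measurableSet
  -- nonnegativity of the speed coefficient
  have hcnn : ∀ n : ℕ, (0 : EReal) ≤ ((((n : ℝ) ^ (2 * α - 1))⁻¹ : ℝ) : EReal) := fun n =>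
    EReal.coe_nonneg.2 (inv_nonneg.2 (Real.rpow_nonneg (Nat.cast_nonneg n) _))
  -- the sequence in the statement is nonpositive
  have hb_nonpos : ∀ n : ℕ, ((((n : ℝ) ^ (2 * α - 1))⁻¹ : ℝ) : EReal) *
      elog (((gibbsMeasure β (fun _ => 0) n).map
        (fun σ => (mag σ - n * m) / (n : ℝ) ^ α)) {x : ℝ | 1 < |x|}) ≤ 0 := by
    intro n
    calc ((((n : ℝ) ^ (2 * α - 1))⁻¹ : ℝ) : EReal) *
        elog (((gibbsMeasure β (fun _ => 0) n).map
          (fun σ => (mag σ - n * m) / (n : ℝ) ^ α)) {x : ℝ | 1 < |x|})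
        ≤ ((((n : ℝ) ^ (2 * α - 1))⁻¹ : ℝ) : EReal) * 0 :=
          mul_le_mul_of_nonneg_left (elog_nonpos' (gibbs_map_le_one _ _ _ _ _)) (hcnn n)
      _ = 0 := mul_zero _
  -- eventually n^α < n * m
  have htend : Tendsto (fun n : ℕ => (n : ℝ) ^ (α - 1)) atTop (𝓝 0) := by
    have h1 : Tendsto (fun x : ℝ => x ^ (α - 1)) atTop (𝓝 0) := by
      have h2 := tendsto_rpow_neg_atTop (y := 1 - α) (by linarith)
      simpa [show -(1 - α) = α - 1 by ring] using h2
    exact h1.comp tendsto_natCast_atTop_atTop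
  have hev : ∀ᶠ n : ℕ in atTop, (n : ℝ) ^ α < n * m := by
    filter_upwards [htend.eventually (gt_mem_nhds hm), eventually_ge_atTop 1] with n h1 h2
    have hn0 : (0 : ℝ) < n := by exact_mod_cast h2
    have hrw : (n : ℝ) ^ α = (n : ℝ) ^ (α - 1) * (n : ℝ) ^ (1 : ℝ) := by
      rw [← Real.rpow_add hn0]; norm_num
    rw [hrw, Real.rpow_one]
    nlinarith
  -- measure comparison
  have hPle : ∀ᶠ n : ℕ in atTop,
      ((gibbsMeasure β (fun _ => 0) n).map
        (fun σ => (mag σ + n * m) / (n : ℝ) ^ α)) (Set.Ioo (-1 : ℝ) 1) ≤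
      ((gibbsMeasure β (fun _ => 0) n).map
        (fun σ => (mag σ - n * m) / (n : ℝ) ^ α)) {x : ℝ | 1 < |x|} := by
    filter_upwards [hev, eventually_ge_atTop 1] with n hn hn1
    have hn0 : (0 : ℝ) < n := by exact_mod_cast hn1
    have hna : 0 < (n : ℝ) ^ α := Real.rpow_pos_of_pos hn0 α
    rw [Measure.map_apply (measurable_of_countable _) measurableSet_Ioo,
      Measure.map_apply (measurable_of_countable _) hS]
    apply measure_mono
    intro σ hσ
    simp only [Set.mem_preimage, Set.mem_Ioo] at hσ
    obtain ⟨hl, hr⟩ := hσ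
    have habs : |mag σ + n * m| < (n : ℝ) ^ α := by
      rw [abs_lt]
      constructor
      · have := (lt_div_iff₀ hna).1 hl; linarith
      · have := (div_lt_iff₀ hna).1 hr; linarith
    have h3 : |(mag σ + n * m) - (mag σ - n * m)| ≤ |mag σ + n * m| + |mag σ - n * m| :=
      abs_sub _ _
    have heq : (mag σ + n * m) - (mag σ - n * m) = 2 * ((n : ℝ) * m) := by ring
    rw [heq, abs_of_pos (by nlinarith : (0 : ℝ) < 2 * ((n : ℝ) * m))] at h3
    have hlt : (n : ℝ) ^ α < |mag σ - n * m| := by linarith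
    simp only [Set.mem_preimage, Set.mem_setOf_eq]
    rw [abs_div, abs_of_pos hna]
    exact (one_lt_div hna).2 hlt
  -- from the hypothesis H : lower bound at a neighbourhood of 0
  obtain ⟨-, -, hH⟩ := H
  have hinf0 : (⨅ x ∈ interior (Set.Ioo (-1 : ℝ) 1),
      ((ENNReal.ofReal (x ^ 2 / (2 * s2)) : ℝ≥0∞) : EReal)) = 0 := by
    rw [interior_Ioo]
    apply le_antisymm
    · refine iInf_le_of_le 0 (iInf_le_of_le ⟨by norm_num, by norm_num⟩ ?_)
      norm_num
    · exact le_iInf fun x => le_iInf fun _ => EReal.coe_ennreal_nonneg _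
  have h0le : (0 : EReal) ≤ liminf (fun n : ℕ =>
      ((((n : ℝ) ^ (2 * α - 1))⁻¹ : ℝ) : EReal) *
        elog (((gibbsMeasure β (fun _ => 0) n).map
          (fun σ => (mag σ + n * m) / (n : ℝ) ^ α)) (Set.Ioo (-1 : ℝ) 1))) atTop := by
    have hlb := (hH (Set.Ioo (-1) 1) measurableSet_Ioo).1
    rwa [hinf0, neg_zero] at hlb
  have haleb : ∀ᶠ n : ℕ in atTop,
      ((((n : ℝ) ^ (2 * α - 1))⁻¹ : ℝ) : EReal) *
        elog (((gibbsMeasure β (fun _ => 0) n).map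
          (fun σ => (mag σ + n * m) / (n : ℝ) ^ α)) (Set.Ioo (-1 : ℝ) 1)) ≤
      ((((n : ℝ) ^ (2 * α - 1))⁻¹ : ℝ) : EReal) *
        elog (((gibbsMeasure β (fun _ => 0) n).map
          (fun σ => (mag σ - n * m) / (n : ℝ) ^ α)) {x : ℝ | 1 < |x|}) :=
    hPle.mono fun n hn => mul_le_mul_of_nonneg_left (elog_mono' hn) (hcnn n)
  have key : limsup (fun n : ℕ => ((((n : ℝ) ^ (2 * α - 1))⁻¹ : ℝ) : EReal) *
      elog (((gibbsMeasure β (fun _ => 0) n).map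
        (fun σ => (mag σ - n * m) / (n : ℝ) ^ α)) {x : ℝ | 1 < |x|})) atTop = 0 := by
    apply le_antisymm
    · exact limsup_le_of_le (by isBoundedDefault) (Eventually.of_forall hb_nonpos)
    · exact h0le.trans ((liminf_le_liminf haleb).trans liminf_le_limsup)
  refine ⟨key, fun H' => ?_⟩
  obtain ⟨-, -, hH'⟩ := H'
  have hub := (hH' {x : ℝ | 1 < |x|} hS).2
  rw [key] at hub
  have hinfle : (⨅ x ∈ closure {x : ℝ | 1 < |x|},
      ((ENNReal.ofReal (x ^ 2 / (2 * s2)) : ℝ≥0∞) : EReal)) ≤ 0 := by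
    simpa using EReal.le_neg_of_le_neg hub
  have hclos : closure {x : ℝ | 1 < |x|} ⊆ {x : ℝ | 1 ≤ |x|} :=
    closure_minimal (fun x (hx : 1 < |x|) => le_of_lt hx)
      (isClosed_le continuous_const continuous_abs)
  have hbound : ((ENNReal.ofReal (1 / (2 * s2)) : ℝ≥0∞) : EReal) ≤
      ⨅ x ∈ closure {x : ℝ | 1 < |x|},
        ((ENNReal.ofReal (x ^ 2 / (2 * s2)) : ℝ≥0∞) : EReal) := by
    refine le_iInf fun x => le_iInf fun hx => ?_
    have h1x : (1 : ℝ) ≤ |x| := hclos hx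
    have hx2 : (1 : ℝ) ≤ x ^ 2 := by nlinarith [abs_nonneg x, sq_abs x]
    have hdivle : (1 : ℝ) / (2 * s2) ≤ x ^ 2 / (2 * s2) := by gcongr
    exact EReal.coe_ennreal_le_coe_ennreal_iff.2 (ENNReal.ofReal_le_ofReal hdivle)
  have hc2 : (0 : EReal) < ((ENNReal.ofReal (1 / (2 * s2)) : ℝ≥0∞) : EReal) := by
    rw [EReal.coe_ennreal_pos]
    exact ENNReal.ofReal_pos.2 (by positivity)
  exact absurd (hbound.trans hinfle) (not_le.2 hc2)
end
end

section
/- Let m ∈ ℝ and α ∈ (0,1). Then for every realization h = (h_i)_{i∈ℕ} ∈ ℝ^ℕ and every n ≥ 1, the random variable (S_n − n m)/n^α + W/n^{α−1/2} is, under the product measure P_{n,β}^h ⊗ N(0, β^{−1}), absolutely continuous with respect to Lebesgue measure on ℝ, with density s ↦ exp(−n G_n^h(m + n^{α−1} s)) / ∫_ℝ exp(−n G_n^h(m + n^{α−1} t)) dt. -/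
open MeasureTheory ProbabilityTheory Real Filter Topology
open scoped ENNReal NNReal

noncomputable section

lemma hs_spin_sum (n : ℕ) (t : Fin n → ℝ) :
    ∑ σ : Fin n → Bool, Real.exp (∑ i, t i * spin (σ i))
      = 2^n * ∏ i, Real.cosh (t i) := by
  have h1 : ∀ σ : Fin n → Bool, Real.exp (∑ i, t i * spin (σ i))
      = ∏ i, Real.exp (t i * spin (σ i)) := fun σ => Real.exp_sum _ _
  simp_rw [h1]
  rw [← Fintype.prod_sum fun i b => Real.exp (t i * spin b)]
  have h2 : ∀ i : Fin n, (∑ b : Bool, Real.exp (t i * spin b)) = 2 * Real.cosh (t i) := by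
    intro i
    rw [Fintype.sum_bool]
    simp only [spin]
    norm_num
    rw [Real.cosh_eq]
    ring
  simp_rw [h2]
  rw [Finset.prod_mul_distrib, Finset.prod_const]
  simp

lemma hs_algebra (N α β C A1 v' s m S x : ℝ) (hN : 0 < N)
    (hC : C = N ^ (α - 1/2)) (hA1 : A1 = N ^ α)
    (hv' : v' = (C⁻¹)^2 * β⁻¹) (hx : x = m + N ^ (α-1) * s) :
    β/(2*N)*S^2 - (s - (S - N*m)/A1)^2/(2*v') = β*x*S - N*(β/2*x^2) := by
  have key : ∀ a b : ℝ, N ^ a * N ^ b = N ^ (a+b) := fun a b => (Real.rpow_add hN a b).symm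
  have hN1 : N ^ (1:ℝ) = N := Real.rpow_one N
  have hCne : C ≠ 0 := by rw [hC]; positivity
  have hA1ne : A1 ≠ 0 := by rw [hA1]; positivity
  have h1 : C * C * N = A1 * A1 := by
    rw [hC, hA1]; nth_rewrite 3 [← hN1]; rw [key, key, key]; congr 1; ring
  have hA : N ^ (α-1) * N = A1 := by
    rw [hA1]; nth_rewrite 2 [← hN1]; rw [key]; congr 1; ring
  have hx1 : A1 * s = N * x - N * m := by rw [hx, ← hA]; ring
  have h2 : s - (S - N*m)/A1 = (N*x - S)/A1 := by
    field_simp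
    linarith [hx1]
  rw [h2, hv']
  have h3 : ((N*x - S)/A1)^2 / (2 * ((C⁻¹)^2 * β⁻¹)) = β * (N*x - S)^2 / (2*N) := by
    rw [div_pow]
    field_simp
    linear_combination (β * (N*x-S)^2) * h1
  rw [h3]
  field_simp
  ring

lemma hs_sum_weight_pdf (β : ℝ) (hβ : 0 < β) (m α : ℝ) (h : ℕ → ℝ) (n : ℕ) (hn : 1 ≤ n)
    (v' : ℝ≥0) (hv' : (v' : ℝ) = ((((n:ℝ) ^ (α - 1/2))⁻¹)^2) * β⁻¹) (s : ℝ) :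
    ∑ σ : Fin n → Bool, gibbsWeight β h n σ *
        gaussianPDFReal ((mag σ - n * m) / (n:ℝ) ^ α) v' s
      = (Real.sqrt (2 * π * v'))⁻¹ * 2^n *
        Real.exp (-(n : ℝ) * Gn β h n (m + (n:ℝ) ^ (α - 1) * s)) := by
  have hN : (0:ℝ) < n := by exact_mod_cast hn
  set x : ℝ := m + (n:ℝ) ^ (α - 1) * s with hx
  have hstep : ∀ σ : Fin n → Bool, gibbsWeight β h n σ *
      gaussianPDFReal ((mag σ - n * m) / (n:ℝ) ^ α) v' s
      = (Real.sqrt (2 * π * v'))⁻¹ *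
        (Real.exp (∑ i : Fin n, (β * (x + h i)) * spin (σ i)) * Real.exp (-((n:ℝ) * (β/2*x^2)))) := by
    intro σ
    rw [gibbsWeight, gaussianPDFReal]
    rw [mul_left_comm, ← Real.exp_add, ← Real.exp_add]
    congr 2
    have hexp_sum : ∑ i : Fin n, β * (x + h i) * spin (σ i)
        = β * x * mag σ + β * ∑ i : Fin n, h i * spin (σ i) := by
      rw [mag, Finset.mul_sum, Finset.mul_sum, ← Finset.sum_add_distrib]
      exact Finset.sum_congr rfl fun i _ => by ring
    have halg := hs_algebra (n:ℝ) α β ((n:ℝ) ^ (α - 1/2)) ((n:ℝ) ^ α) (v':ℝ) s m (mag σ) x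
      hN rfl rfl hv' hx
    rw [hexp_sum]
    linear_combination halg
  simp_rw [hstep]
  rw [← Finset.mul_sum, ← Finset.sum_mul, hs_spin_sum n (fun i : Fin n => β * (x + h i))]
  have hGn : Real.exp (-(n : ℝ) * Gn β h n x)
      = Real.exp (-((n:ℝ) * (β/2*x^2))) * ∏ i : Fin n, Real.cosh (β * (x + h i)) := by
    rw [Gn]
    have hNne : (n:ℝ) ≠ 0 := ne_of_gt hN
    have : -(n : ℝ) * (β / 2 * x ^ 2 - (1 / (n:ℝ)) * ∑ i : Fin n, Real.log (Real.cosh (β * (x + h i))))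
        = -((n:ℝ) * (β/2*x^2)) + ∑ i : Fin n, Real.log (Real.cosh (β * (x + h i))) := by
      field_simp
      ring
    rw [this, Real.exp_add, Real.exp_sum]
    congr 1
    exact Finset.prod_congr rfl fun i _ => Real.exp_log (Real.cosh_pos _)
  rw [hGn]
  ring

/-- The Hubbard-Stratonovich transformation (Lemma 5.1 of the paper). -/
theorem hubbard_stratonovich
    (β : ℝ) (hβ : 0 < β) (m α : ℝ) (hα1 : 0 < α) (hα2 : α < 1)
    (h : ℕ → ℝ) (n : ℕ) (hn : 1 ≤ n) :
    (((gibbsMeasure β h n).prod (gaussianReal 0 (Real.toNNReal β⁻¹))).map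
        (fun p : (Fin n → Bool) × ℝ =>
          (mag p.1 - n * m) / (n : ℝ) ^ α + p.2 / (n : ℝ) ^ (α - 1 / 2)))
      = volume.withDensity (fun s => ENNReal.ofReal
          (Real.exp (-(n : ℝ) * Gn β h n (m + (n : ℝ) ^ (α - 1) * s)) /
            ∫ t : ℝ, Real.exp (-(n : ℝ) * Gn β h n (m + (n : ℝ) ^ (α - 1) * t)))) := by
  have hN : (0:ℝ) < n := by exact_mod_cast hn
  set v : ℝ≥0 := Real.toNNReal β⁻¹ with hv
  set c : ℝ := (n : ℝ) ^ (α - 1/2) with hcdef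
  have hc : 0 < c := Real.rpow_pos_of_pos hN _
  set v' : ℝ≥0 := ⟨(c⁻¹)^2, sq_nonneg _⟩ * v with hv'def
  have hv'coe : (v' : ℝ) = (c⁻¹)^2 * β⁻¹ := by
    rw [hv'def]; change (c⁻¹)^2 * (v:ℝ) = _; rw [hv, Real.coe_toNNReal _ (inv_pos.2 hβ).le]
  have hv'0 : v' ≠ 0 := by
    intro h0
    have h1 : (0:ℝ) < (v' : ℝ) := by rw [hv'coe]; positivity
    rw [h0] at h1; simp at h1
  set Z : ℝ := ∑ σ : Fin n → Bool, gibbsWeight β h n σ with hZdef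
  have hZ : 0 < Z := Finset.sum_pos (fun σ _ => Real.exp_pos _) Finset.univ_nonempty
  set a : (Fin n → Bool) → ℝ := fun σ => (mag σ - n * m) / (n : ℝ) ^ α with hadef
  set K : ℝ := (Real.sqrt (2 * π * v'))⁻¹ * 2^n with hKdef
  have hK : 0 < K := by
    rw [hKdef]
    have : (0:ℝ) < (v' : ℝ) := by rw [hv'coe]; positivity
    positivity
  have hsum : ∀ s : ℝ, ∑ σ : Fin n → Bool, gibbsWeight β h n σ *
      gaussianPDFReal (a σ) v' s
      = K * Real.exp (-(n : ℝ) * Gn β h n (m + (n:ℝ) ^ (α - 1) * s)) :=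
    fun s => hs_sum_weight_pdf β hβ m α h n hn v' (by rw [hv'coe]) s
  set I : ℝ := ∫ t : ℝ, Real.exp (-(n : ℝ) * Gn β h n (m + (n : ℝ) ^ (α - 1) * t)) with hIdef
  have hKI : K * I = Z := by
    rw [hIdef, ← integral_const_mul]
    have heq : (fun t => K * Real.exp (-(n : ℝ) * Gn β h n (m + (n : ℝ) ^ (α - 1) * t)))
        = fun t => ∑ σ : Fin n → Bool, gibbsWeight β h n σ * gaussianPDFReal (a σ) v' t := by
      funext t; rw [hsum t]
    rw [heq, integral_finset_sum _
      (fun σ _ => (integrable_gaussianPDFReal (a σ) v').const_mul _)]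
    simp_rw [integral_const_mul, integral_gaussianPDFReal_eq_one _ hv'0, mul_one]
    rfl
  have hI : I = Z / K := by rw [eq_div_iff (ne_of_gt hK), mul_comm]; exact hKI
  -- measurability of the map
  have hf : Measurable (fun p : (Fin n → Bool) × ℝ =>
      (mag p.1 - n * m) / (n : ℝ) ^ α + p.2 / c) := by
    have hf1 : Measurable (fun p : (Fin n → Bool) × ℝ => (mag p.1 - n * m) / (n : ℝ) ^ α) :=
      (measurable_of_countable
        (fun σ : Fin n → Bool => (mag σ - n * m) / (n : ℝ) ^ α)).comp measurable_fst
    exact hf1.add (measurable_snd.div_const _)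
  -- the gaussian map
  have hgm : ∀ σ : Fin n → Bool, Measurable (fun w : ℝ => a σ + w / c) :=
    fun σ => (measurable_id.div_const _).const_add _
  have hmapg : ∀ σ : Fin n → Bool,
      (gaussianReal 0 v).map (fun w => a σ + w / c) = gaussianReal (a σ) v' := by
    intro σ
    have hcomp : (fun w : ℝ => a σ + w / c) = (· + a σ) ∘ (fun w : ℝ => c⁻¹ * w) := by
      funext w
      simp only [Function.comp_apply]
      rw [div_eq_inv_mul, add_comm]
    rw [hcomp, ← Measure.map_map (measurable_add_const _) (measurable_const_mul _),
      gaussianReal_map_const_mul, gaussianReal_map_add_const]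
    rw [mul_zero, zero_add]
    rfl
  refine Measure.ext fun A hA => ?_
  rw [Measure.map_apply hf hA, Measure.prod_apply (hf hA)]
  have hγ : ∀ σ : Fin n → Bool,
      gaussianReal 0 v (Prod.mk σ ⁻¹'
        ((fun p : (Fin n → Bool) × ℝ =>
          (mag p.1 - n * m) / (n : ℝ) ^ α + p.2 / c) ⁻¹' A))
      = ∫⁻ s in A, gaussianPDF (a σ) v' s := by
    intro σ
    have : (Prod.mk σ ⁻¹'
        ((fun p : (Fin n → Bool) × ℝ =>
          (mag p.1 - n * m) / (n : ℝ) ^ α + p.2 / c) ⁻¹' A))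
        = (fun w : ℝ => a σ + w / c) ⁻¹' A := rfl
    rw [this, ← Measure.map_apply (hgm σ) hA, hmapg σ,
      gaussianReal_of_var_ne_zero _ hv'0, withDensity_apply _ hA]
  rw [gibbsMeasure, lintegral_smul_measure, lintegral_finset_sum_measure]
  simp_rw [lintegral_smul_measure, lintegral_dirac, hγ]
  rw [withDensity_apply _ hA]
  simp_rw [smul_eq_mul, ← lintegral_const_mul' _ _ ENNReal.ofReal_ne_top]
  rw [← lintegral_finset_sum _
    (fun σ _ => (measurable_gaussianPDF (a σ) v').const_mul _),
    ← lintegral_const_mul' _ _ (ENNReal.inv_ne_top.2 (by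
      simp [ENNReal.ofReal_eq_zero, not_le, hZ]; exact hZ))]
  refine lintegral_congr fun s => ?_
  -- pointwise identity
  have hw : ∀ σ : Fin n → Bool, 0 ≤ gibbsWeight β h n σ := fun σ => (Real.exp_pos _).le
  simp_rw [gaussianPDF, ← ENNReal.ofReal_mul (hw _)]
  rw [← ENNReal.ofReal_sum_of_nonneg
    (fun σ _ => mul_nonneg (hw σ) (gaussianPDFReal_nonneg _ _ _)), hsum s]
  have htarget : Real.exp (-(n : ℝ) * Gn β h n (m + (n:ℝ) ^ (α - 1) * s)) / I
      = K * Real.exp (-(n : ℝ) * Gn β h n (m + (n:ℝ) ^ (α - 1) * s)) / Z := by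
    rw [hI, div_div_eq_mul_div, mul_comm]
  rw [htarget, ENNReal.ofReal_div_of_pos hZ, div_eq_mul_inv, mul_comm]
end
end

section
/- Suppose ν has a finite absolute first moment. Then for μ-almost every realization h and every j ∈ ℕ₀, the j-th derivatives G_n^{h,(j)} converge to G^{(j)} as n → ∞, uniformly on compact subsets of ℝ. -/
open MeasureTheory ProbabilityTheory Real Filter Topology
open scoped ENNReal NNReal

noncomputable section

/-! ### Auxiliary material for the proof -/

section Aux

lemma hasDerivAt_tanh' (x : ℝ) : HasDerivAt Real.tanh (1 - Real.tanh x ^ 2) x := by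
  have h : HasDerivAt (fun y => Real.sinh y / Real.cosh y)
      ((Real.cosh x * Real.cosh x - Real.sinh x * Real.sinh x) / Real.cosh x ^ 2) x :=
    (Real.hasDerivAt_sinh x).div (Real.hasDerivAt_cosh x) (Real.cosh_pos x).ne'
  have e : (fun y => Real.sinh y / Real.cosh y) = Real.tanh := by
    funext y; rw [Real.tanh_eq_sinh_div_cosh]
  rw [e] at h
  convert h using 1
  have h2 := Real.cosh_sq_sub_sinh_sq x
  have hc := (Real.cosh_pos x).ne'
  rw [Real.tanh_eq_sinh_div_cosh]
  field_simp

lemma abs_tanh_le_one' (x : ℝ) : |Real.tanh x| ≤ 1 := by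
  have h1 : Real.cosh x - Real.sinh x = Real.exp (-x) := Real.cosh_sub_sinh x
  have h2 : Real.cosh x + Real.sinh x = Real.exp x := Real.cosh_add_sinh x
  have hc := Real.cosh_pos x
  have e1 := Real.exp_pos (-x)
  have e2 := Real.exp_pos x
  rw [Real.tanh_eq_sinh_div_cosh, abs_div, abs_of_pos hc, div_le_one hc, abs_le]
  constructor <;> nlinarith

lemma log_cosh_le_abs' (x : ℝ) : Real.log (Real.cosh x) ≤ |x| := by
  have h : Real.cosh x ≤ Real.exp |x| := by
    have := Real.cosh_abs x
    have h2 := Real.cosh_add_sinh |x|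
    have h3 : 0 ≤ Real.sinh |x| := Real.sinh_nonneg_iff.2 (abs_nonneg x)
    nlinarith [Real.cosh_pos x]
  calc Real.log (Real.cosh x) ≤ Real.log (Real.exp |x|) :=
        Real.log_le_log (Real.cosh_pos x) h
    _ = |x| := Real.log_exp _

lemma continuous_tanh' : Continuous Real.tanh := by
  have : Real.tanh = fun x => Real.sinh x / Real.cosh x := by
    funext x; exact Real.tanh_eq_sinh_div_cosh x
  rw [this]
  exact Real.continuous_sinh.div Real.continuous_cosh fun x => (Real.cosh_pos x).ne'

/-- Polynomials representing derivatives of `log ∘ cosh` in terms of `tanh`. -/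
def qpoly : ℕ → Polynomial ℝ
  | 0 => Polynomial.X
  | (j+1) => (1 - Polynomial.X ^ 2) * (qpoly j).derivative

/-- `FF β j` is the `j`-th derivative of `fun x => log (cosh (β * x))`. -/
def FF (β : ℝ) : ℕ → ℝ → ℝ
  | 0 => fun x => Real.log (Real.cosh (β * x))
  | (j+1) => fun x => β ^ (j+1) * (qpoly j).eval (Real.tanh (β * x))

lemma continuous_FF (β : ℝ) (j : ℕ) : Continuous (FF β j) := by
  cases j with
  | zero =>
    exact (Real.continuous_cosh.comp (continuous_const.mul continuous_id)).log
      (fun x => (Real.cosh_pos _).ne')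
  | succ j =>
    exact continuous_const.mul ((qpoly j).continuous_aeval.comp
      (continuous_tanh'.comp (continuous_const.mul continuous_id)))

lemma hasDerivAt_FF (β : ℝ) (j : ℕ) (x : ℝ) : HasDerivAt (FF β j) (FF β (j+1) x) x := by
  have htanh : HasDerivAt (fun y => Real.tanh (β * y))
      (β * (1 - Real.tanh (β * x) ^ 2)) x := by
    have := (hasDerivAt_tanh' (β * x)).comp x ((hasDerivAt_id x).const_mul β)
    simpa [mul_comm, Function.comp_def] using this
  cases j with
  | zero =>
    have hcosh : HasDerivAt (fun y => Real.cosh (β * y)) (β * Real.sinh (β * x)) x := by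
      have := (Real.hasDerivAt_cosh (β * x)).comp x ((hasDerivAt_id x).const_mul β)
      simpa [mul_comm, Function.comp_def] using this
    have hlog : HasDerivAt (fun y => Real.log (Real.cosh (β * y)))
        ((Real.cosh (β * x))⁻¹ * (β * Real.sinh (β * x))) x :=
      (Real.hasDerivAt_log (Real.cosh_pos (β * x)).ne').comp (h := fun y => Real.cosh (β * y)) x hcosh
    have : FF β 1 x = (Real.cosh (β * x))⁻¹ * (β * Real.sinh (β * x)) := by
      simp only [FF, qpoly, Polynomial.eval_X, Real.tanh_eq_sinh_div_cosh]
      field_simp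
      ring
    rw [show FF β 0 = fun y => Real.log (Real.cosh (β * y)) from rfl, this]
    exact hlog
  | succ j =>
    have hq : HasDerivAt (fun y => (qpoly j).eval (Real.tanh (β * y)))
        ((qpoly j).derivative.eval (Real.tanh (β * x)) * (β * (1 - Real.tanh (β * x) ^ 2))) x :=
      ((qpoly j).hasDerivAt (Real.tanh (β * x))).comp (h := fun y => Real.tanh (β * y)) x htanh
    have h := hq.const_mul (β ^ (j+1))
    have : FF β (j+2) x = β ^ (j+1) *
        ((qpoly j).derivative.eval (Real.tanh (β * x)) * (β * (1 - Real.tanh (β * x) ^ 2))) := by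
      simp only [FF, qpoly, Polynomial.eval_mul, Polynomial.eval_sub, Polynomial.eval_one,
        Polynomial.eval_pow, Polynomial.eval_X]
      ring
    rw [show FF β (j+1) = fun y => β ^ (j+1) * (qpoly j).eval (Real.tanh (β * y)) from rfl, this]
    exact h

lemma FF_bound (β : ℝ) (j : ℕ) : ∃ C : ℝ, 0 ≤ C ∧ ∀ x : ℝ, |FF β (j+1) x| ≤ C := by
  obtain ⟨C, hC⟩ := (isCompact_Icc (a := (-1:ℝ)) (b := 1)).exists_bound_of_continuousOn
    (f := fun t => β ^ (j+1) * (qpoly j).eval t)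
    ((continuous_const.mul (qpoly j).continuous_aeval).continuousOn)
  refine ⟨max C 0, le_max_right _ _, fun x => ?_⟩
  have hx : Real.tanh (β * x) ∈ Set.Icc (-1:ℝ) 1 := by
    have := abs_tanh_le_one' (β * x); rw [abs_le] at this; exact this
  have e : FF β (j+1) x = β ^ (j+1) * (qpoly j).eval (Real.tanh (β * x)) := rfl
  rw [e, ← Real.norm_eq_abs]
  exact le_trans (hC _ hx) (le_max_left _ _)

lemma lip_of_derivBound {f f' : ℝ → ℝ} {C : ℝ}
    (hd : ∀ x, HasDerivAt f (f' x) x) (hb : ∀ x, |f' x| ≤ C) (x y : ℝ) :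
    |f x - f y| ≤ C * |x - y| := by
  have := Convex.norm_image_sub_le_of_norm_hasDerivWithin_le
    (fun z (_ : z ∈ (Set.univ : Set ℝ)) => (hd z).hasDerivWithinAt)
    (fun z _ => by simpa [Real.norm_eq_abs] using hb z)
    convex_univ (Set.mem_univ y) (Set.mem_univ x)
  simpa [Real.norm_eq_abs, abs_sub_comm] using this

lemma tendstoUniformlyOn_of_rat {g : ℕ → ℝ → ℝ} {f : ℝ → ℝ} {C : ℝ} (hC : 0 ≤ C)
    (hg : ∀ n x y, |g n x - g n y| ≤ C * |x - y|)
    (hf : ∀ x y, |f x - f y| ≤ C * |x - y|)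
    (htend : ∀ r : ℚ, Tendsto (fun n => g n r) atTop (nhds (f r)))
    {K : Set ℝ} (hK : IsCompact K) :
    TendstoUniformlyOn g f atTop K := by
  rw [Metric.tendstoUniformlyOn_iff]
  intro ε hε
  set δ : ℝ := ε / (4 * (C + 1)) with hδdef
  have hδ : 0 < δ := by positivity
  have hcover : K ⊆ ⋃ r : ℚ, Metric.ball (r : ℝ) δ := by
    intro x _
    obtain ⟨q, hq⟩ := exists_rat_near x hδ
    exact Set.mem_iUnion.2 ⟨q, by simpa [Metric.mem_ball, Real.dist_eq] using hq⟩
  obtain ⟨t, ht⟩ := hK.elim_finite_subcover (fun r : ℚ => Metric.ball (r:ℝ) δ)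
    (fun r => Metric.isOpen_ball) hcover
  have hev : ∀ᶠ n in atTop, ∀ r ∈ t, dist (g n (r:ℝ)) (f (r:ℝ)) < ε / 4 := by
    rw [eventually_all_finset]
    intro r _
    exact Metric.tendsto_nhds.mp (htend r) (ε/4) (by positivity)
  filter_upwards [hev] with n hn x hx
  obtain ⟨r, hrt, hr⟩ : ∃ r ∈ t, x ∈ Metric.ball ((r:ℚ):ℝ) δ := by
    simpa using ht hx
  rw [Metric.mem_ball, Real.dist_eq] at hr
  have h1 : |f x - f r| ≤ C * |x - (r:ℝ)| := hf _ _
  have h2 : |g n (r:ℝ) - g n x| ≤ C * |(r:ℝ) - x| := hg _ _ _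
  have h3 : dist (g n (r:ℝ)) (f (r:ℝ)) < ε / 4 := hn r hrt
  rw [Real.dist_eq] at h3 ⊢
  have hCd : C * |x - (r:ℝ)| ≤ ε / 4 := by
    calc C * |x - (r:ℝ)| ≤ C * δ := mul_le_mul_of_nonneg_left hr.le hC
      _ ≤ (C + 1) * δ := by nlinarith
      _ = ε / 4 := by rw [hδdef]; field_simp
  have hCd' : C * |(r:ℝ) - x| ≤ ε / 4 := by rwa [abs_sub_comm]
  calc |f x - g n x| ≤ |f x - f (r:ℝ)| + |f (r:ℝ) - g n x| := abs_sub_le _ _ _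
    _ ≤ |f x - f (r:ℝ)| + (|f (r:ℝ) - g n (r:ℝ)| + |g n (r:ℝ) - g n x|) :=
        add_le_add (le_refl _) (abs_sub_le _ _ _)
    _ ≤ ε/4 + (ε/4 + ε/4) := by
        refine add_le_add (le_trans h1 hCd) (add_le_add ?_ (le_trans h2 hCd'))
        rw [abs_sub_comm]; exact h3.le
    _ < ε := by linarith

section MeasureAux

variable {ν : Measure ℝ} {μ : Measure (ℕ → ℝ)} [IsProbabilityMeasure ν]

lemma pi_map_eval (n : ℕ) (a : Fin n) :
    (Measure.pi fun _ : Fin n => ν).map (Function.eval a) = ν := by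
  ext s hs
  rw [Measure.map_apply (measurable_pi_apply a) hs, Set.eval_preimage,
    Measure.pi_pi]
  rw [Finset.prod_eq_single a (fun k _ hk => by simp [Function.update_of_ne hk])
    (fun h => absurd (Finset.mem_univ a) h)]
  simp

lemma map_eval_eq (hμ : IsProductMeasure ν μ) (i : ℕ) :
    μ.map (fun h => h i) = ν := by
  have h1 := hμ (i+1)
  have h2 := Measure.map_map (μ := μ)
    (f := fun (h : ℕ → ℝ) (k : Fin (i+1)) => h (k:ℕ))
    (g := Function.eval (⟨i, Nat.lt_succ_self i⟩ : Fin (i+1)))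
    (measurable_pi_apply _) (measurable_pi_lambda _ fun k => measurable_pi_apply _)
  rw [show (fun h : ℕ → ℝ => h i)
      = Function.eval (⟨i, Nat.lt_succ_self i⟩ : Fin (i+1))
        ∘ (fun (h : ℕ → ℝ) (k : Fin (i+1)) => h (k:ℕ)) from rfl,
    ← h2, h1, pi_map_eval]

lemma pi_map_pair (n : ℕ) (a b : Fin n) (hab : a ≠ b) :
    (Measure.pi fun _ : Fin n => ν).map (fun v => (v a, v b)) = ν.prod ν := by
  have hmeas : Measurable (fun v : Fin n → ℝ => (v a, v b)) :=
    (measurable_pi_apply a).prodMk (measurable_pi_apply b)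
  refine (Measure.prod_eq fun s t hs ht => ?_).symm
  rw [Measure.map_apply hmeas (hs.prod ht)]
  have hpre : (fun v : Fin n → ℝ => (v a, v b)) ⁻¹' (s ×ˢ t)
      = Set.pi Set.univ (fun k => if k = a then s else if k = b then t else Set.univ) := by
    ext v
    simp only [Set.mem_preimage, Set.mem_prod, Set.mem_pi, Set.mem_univ, forall_true_left]
    constructor
    · rintro ⟨h1, h2⟩ k
      split_ifs with hka hkb
      · subst hka; exact h1
      · subst hkb; exact h2
      · trivial
    · intro h
      refine ⟨?_, ?_⟩
      · have := h a; simpa using this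
      · have := h b; simp only [if_neg hab.symm, if_pos rfl] at this; exact this
  rw [hpre, Measure.pi_pi]
  have hone : ∀ k : Fin n, k ∉ ({a, b} : Finset (Fin n)) →
      ν (if k = a then s else if k = b then t else Set.univ) = 1 := by
    intro k hk
    simp only [Finset.mem_insert, Finset.mem_singleton, not_or] at hk
    rw [if_neg hk.1, if_neg hk.2]
    exact measure_univ
  rw [← Finset.prod_subset (Finset.subset_univ ({a, b} : Finset (Fin n)))
    (fun k _ hk => hone k hk), Finset.prod_pair hab]
  simp [hab, Ne.symm hab]

lemma indep_evals (hμ : IsProductMeasure ν μ) [IsProbabilityMeasure μ]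
    {i j : ℕ} (hij : i ≠ j) :
    IndepFun (fun h : ℕ → ℝ => h i) (fun h : ℕ → ℝ => h j) μ := by
  rw [indepFun_iff_map_prod_eq_prod_map_map (measurable_pi_apply i).aemeasurable
    (measurable_pi_apply j).aemeasurable]
  rw [map_eval_eq hμ i, map_eval_eq hμ j]
  set n := max i j + 1 with hn
  have hi : i < n := Nat.lt_succ_of_le (le_max_left _ _)
  have hj : j < n := Nat.lt_succ_of_le (le_max_right _ _)
  have h2 := Measure.map_map (μ := μ)
    (f := fun (h : ℕ → ℝ) (k : Fin n) => h (k:ℕ))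
    (g := fun v : Fin n → ℝ => (v ⟨i, hi⟩, v ⟨j, hj⟩))
    (show Measurable (fun v : Fin n → ℝ => (v ⟨i, hi⟩, v ⟨j, hj⟩)) from
      (measurable_pi_apply _).prodMk (measurable_pi_apply _))
    (measurable_pi_lambda _ fun k => measurable_pi_apply _)
  rw [show (fun h : ℕ → ℝ => (h i, h j))
      = (fun v : Fin n → ℝ => (v ⟨i, hi⟩, v ⟨j, hj⟩))
        ∘ (fun (h : ℕ → ℝ) (k : Fin n) => h (k:ℕ)) from rfl,
    ← h2, hμ n, pi_map_pair n _ _ (by simp only [ne_eq, Fin.mk.injEq]; exact hij)]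

end MeasureAux

end Aux
section Aux2

/-- Growth bound for `FF`. -/
lemma FF_growth (β : ℝ) (j : ℕ) : ∃ D : ℝ, 0 ≤ D ∧ ∀ z : ℝ, |FF β j z| ≤ D + |β| * |z| := by
  cases j with
  | zero =>
    refine ⟨0, le_refl 0, fun z => ?_⟩
    have h0 : 0 ≤ Real.log (Real.cosh (β * z)) := Real.log_nonneg (Real.one_le_cosh _)
    have h1 : Real.log (Real.cosh (β * z)) ≤ |β * z| := log_cosh_le_abs' _
    rw [show FF β 0 z = Real.log (Real.cosh (β * z)) from rfl, abs_of_nonneg h0, abs_mul] at *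
    linarith
  | succ j =>
    obtain ⟨C, hC0, hC⟩ := FF_bound β j
    exact ⟨C, hC0, fun z => le_trans (hC z) (le_add_of_nonneg_right (by positivity))⟩

lemma FF_int (β : ℝ) {ν : Measure ℝ} [IsProbabilityMeasure ν]
    (hmom : Integrable (fun x : ℝ => |x|) ν) (j : ℕ) (x : ℝ) :
    Integrable (fun y => FF β j (x + y)) ν := by
  obtain ⟨D, hD0, hD⟩ := FF_growth β j
  apply Integrable.mono' (g := fun y => (D + |β| * |x|) + |β| * |y|)
    ((integrable_const _).add (hmom.const_mul _))
    (((continuous_FF β j).comp (continuous_const.add continuous_id)).aestronglyMeasurable)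
  refine Filter.Eventually.of_forall fun y => ?_
  calc ‖FF β j (x + y)‖ = |FF β j (x + y)| := rfl
    _ ≤ D + |β| * |x + y| := hD _
    _ ≤ D + |β| * (|x| + |y|) := by
        have := abs_add_le x y
        have hb : (0:ℝ) ≤ |β| := abs_nonneg β
        nlinarith
    _ = (D + |β| * |x|) + |β| * |y| := by ring

/-- The `n`-sample average of `FF β j` shifted by the field. -/
def Sn (β : ℝ) (h : ℕ → ℝ) (j n : ℕ) (x : ℝ) : ℝ :=
  (n:ℝ)⁻¹ * ∑ i ∈ Finset.range n, FF β j (x + h i)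

/-- The `ν`-average of `FF β j`. -/
def AA (β : ℝ) (ν : Measure ℝ) (j : ℕ) (x : ℝ) : ℝ := ∫ y, FF β j (x + y) ∂ν

lemma slln_FF (β : ℝ) {ν : Measure ℝ} {μ : Measure (ℕ → ℝ)}
    [IsProbabilityMeasure ν] [IsProbabilityMeasure μ]
    (hμ : IsProductMeasure ν μ) (j : ℕ) (r : ℝ)
    (hint : Integrable (fun y => FF β j (r + y)) ν) :
    ∀ᵐ h ∂μ, Tendsto (fun n : ℕ => Sn β h j n r) atTop (nhds (AA β ν j r)) := by
  set φ : ℝ → ℝ := fun y => FF β j (r + y) with hφ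
  have hφm : Measurable φ :=
    ((continuous_FF β j).comp (continuous_const.add continuous_id)).measurable
  set X : ℕ → (ℕ → ℝ) → ℝ := fun i h => φ (h i) with hX
  have hXint : Integrable (X 0) μ := by
    have h0 : Integrable φ (μ.map (fun h => h 0)) := by rw [map_eval_eq hμ 0]; exact hint
    exact (integrable_map_measure hφm.aestronglyMeasurable
      (measurable_pi_apply 0).aemeasurable).mp h0
  have hindep : Pairwise (Function.onFun (IndepFun · · μ) X) := fun i k hik =>
    (indep_evals hμ hik).comp hφm hφm
  have hident : ∀ i, IdentDistrib (X i) (X 0) μ μ := by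
    intro i
    have hid : IdentDistrib (fun h : ℕ → ℝ => h i) (fun h : ℕ → ℝ => h 0) μ μ :=
      ⟨(measurable_pi_apply i).aemeasurable, (measurable_pi_apply 0).aemeasurable,
        by rw [map_eval_eq hμ i, map_eval_eq hμ 0]⟩
    exact hid.comp hφm
  have hslln := ProbabilityTheory.strong_law_ae X hXint hindep hident
  have hEX : (∫ h, X 0 h ∂μ) = AA β ν j r := by
    rw [AA, ← map_eval_eq hμ 0,
      integral_map (measurable_pi_apply 0).aemeasurable hφm.aestronglyMeasurable]
  filter_upwards [hslln] with h hh
  rw [hEX] at hh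
  have : (fun n : ℕ => Sn β h j n r)
      = fun n : ℕ => (n:ℝ)⁻¹ • ∑ i ∈ Finset.range n, X i h := by
    funext n; simp [Sn, smul_eq_mul, hX, hφ]
  rw [this]
  exact hh

lemma Sn_lip {β C : ℝ} {j : ℕ} (hC0 : 0 ≤ C)
    (hlip : ∀ x y : ℝ, |FF β j x - FF β j y| ≤ C * |x - y|)
    (h : ℕ → ℝ) (n : ℕ) (x y : ℝ) : |Sn β h j n x - Sn β h j n y| ≤ C * |x - y| := by
  rw [Sn, Sn, ← mul_sub, ← Finset.sum_sub_distrib, abs_mul,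
    abs_of_nonneg (by positivity : (0:ℝ) ≤ (n:ℝ)⁻¹)]
  have h2 : |∑ i ∈ Finset.range n, (FF β j (x + h i) - FF β j (y + h i))|
      ≤ (n:ℝ) * (C * |x - y|) := by
    calc |∑ i ∈ Finset.range n, (FF β j (x + h i) - FF β j (y + h i))|
        ≤ ∑ i ∈ Finset.range n, |FF β j (x + h i) - FF β j (y + h i)| :=
          Finset.abs_sum_le_sum_abs _ _
      _ ≤ ∑ _i ∈ Finset.range n, C * |x - y| := Finset.sum_le_sum fun i _ => by
          have := hlip (x + h i) (y + h i)
          simpa [add_sub_add_right_eq_sub] using this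
      _ = (n:ℝ) * (C * |x - y|) := by simp [Finset.sum_const, mul_comm]
  calc (n:ℝ)⁻¹ * |∑ i ∈ Finset.range n, (FF β j (x + h i) - FF β j (y + h i))|
      ≤ (n:ℝ)⁻¹ * ((n:ℝ) * (C * |x - y|)) := by
        exact mul_le_mul_of_nonneg_left h2 (by positivity)
    _ ≤ C * |x - y| := by
        rcases Nat.eq_zero_or_pos n with hn | hn
        · simp [hn]; positivity
        · rw [inv_mul_cancel_left₀ (Nat.cast_ne_zero.2 hn.ne')]

lemma AA_lip {β C : ℝ} {j : ℕ} {ν : Measure ℝ} [IsProbabilityMeasure ν]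
    (hmom : Integrable (fun x : ℝ => |x|) ν)
    (hlip : ∀ x y : ℝ, |FF β j x - FF β j y| ≤ C * |x - y|)
    (x y : ℝ) : |AA β ν j x - AA β ν j y| ≤ C * |x - y| := by
  rw [AA, AA, ← integral_sub (FF_int β hmom j x) (FF_int β hmom j y)]
  calc |∫ z, (FF β j (x + z) - FF β j (y + z)) ∂ν|
      ≤ ∫ z, |FF β j (x + z) - FF β j (y + z)| ∂ν := by
        simpa [Real.norm_eq_abs] using
          norm_integral_le_integral_norm (fun z => FF β j (x + z) - FF β j (y + z)) (μ := ν)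
    _ ≤ ∫ _z, C * |x - y| ∂ν := by
        apply integral_mono ((FF_int β hmom j x).sub (FF_int β hmom j y)).abs
          (integrable_const _)
        intro z
        have := hlip (x + z) (y + z)
        simpa [add_sub_add_right_eq_sub] using this
    _ = C * |x - y| := by simp
/-- Iterated derivatives of the quadratic part. -/
def QQ (β : ℝ) : ℕ → ℝ → ℝ
  | 0 => fun x => β / 2 * x ^ 2
  | 1 => fun x => β * x
  | 2 => fun _ => β
  | (_+3) => fun _ => 0

lemma hasDerivAt_QQ (β : ℝ) (j : ℕ) (x : ℝ) : HasDerivAt (QQ β j) (QQ β (j+1) x) x := by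
  match j with
  | 0 =>
    have h := (hasDerivAt_pow 2 x).const_mul (β / 2)
    have e : β / 2 * ((2:ℕ) * x ^ (2-1)) = QQ β 1 x := by
      show _ = β * x
      push_cast; ring
    rw [show QQ β 0 = fun y => β / 2 * y ^ 2 from rfl]
    exact e ▸ h
  | 1 =>
    have h := (hasDerivAt_id x).const_mul β
    rw [show QQ β 1 = fun y => β * y from rfl]
    simpa [QQ] using h
  | 2 => exact hasDerivAt_const x β
  | (j+3) => exact hasDerivAt_const x 0

lemma hasDerivAt_Sn (β : ℝ) (h : ℕ → ℝ) (j n : ℕ) (x : ℝ) :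
    HasDerivAt (Sn β h j n) (Sn β h (j+1) n x) x := by
  have hsum : HasDerivAt (fun y => ∑ i ∈ Finset.range n, FF β j (y + h i))
      (∑ i ∈ Finset.range n, FF β (j+1) (x + h i)) x := by
    apply HasDerivAt.fun_sum
    intro i _
    have := (hasDerivAt_FF β j (x + h i)).comp x ((hasDerivAt_id x).add_const (h i))
    simpa [Function.comp_def] using this
  have := hsum.const_mul ((n:ℝ)⁻¹)
  exact this

lemma iteratedDeriv_eq_of_chain {F : ℕ → ℝ → ℝ}
    (hF : ∀ j x, HasDerivAt (F j) (F (j+1) x) x)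
    {f : ℝ → ℝ} (h0 : f = F 0) (j : ℕ) : iteratedDeriv j f = F j := by
  induction j with
  | zero => simpa [iteratedDeriv_zero]
  | succ j ih =>
    rw [iteratedDeriv_succ, ih]
    funext x
    exact (hF j x).deriv
/-- Uniform convergence of the derivatives of `G_n^h` to those of `G`
(Lemma 5.3 (i) of the paper). -/
theorem derivatives_uniform_convergence
    (β : ℝ) (hβ : 0 < β) (ν : Measure ℝ) [IsProbabilityMeasure ν]
    (hmom : Integrable (fun x : ℝ => |x|) ν)
    (μ : Measure (ℕ → ℝ)) [IsProbabilityMeasure μ] (hμ : IsProductMeasure ν μ) :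
    ∀ᵐ h ∂μ, ∀ j : ℕ, ∀ K : Set ℝ, IsCompact K →
      TendstoUniformlyOn (fun n => iteratedDeriv j (Gn β h n))
        (iteratedDeriv j (G β ν)) atTop K := by
  classical
  choose C hC0 hCb using fun j => FF_bound β j
  have hFlip : ∀ j (x y : ℝ), |FF β j x - FF β j y| ≤ C j * |x - y| := fun j x y =>
    lip_of_derivBound (hasDerivAt_FF β j) (hCb j) x y
  have hae : ∀ᵐ h ∂μ, ∀ j : ℕ, ∀ r : ℚ,
      Tendsto (fun n => Sn β h j n (r:ℝ)) atTop (nhds (AA β ν j (r:ℝ))) := by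
    rw [ae_all_iff]; intro j; rw [ae_all_iff]; intro r
    exact slln_FF β hμ j r (FF_int β hmom j r)
  have key : ∀ (h : ℕ → ℝ), (∀ j : ℕ, ∀ r : ℚ,
        Tendsto (fun n => Sn β h j n (r:ℝ)) atTop (nhds (AA β ν j (r:ℝ)))) →
      ∀ j : ℕ, ∀ K : Set ℝ, IsCompact K →
        TendstoUniformlyOn (fun n => Sn β h j n) (AA β ν j) atTop K := by
    intro h hh j K hK
    exact tendstoUniformlyOn_of_rat (hC0 j) (fun n x y => Sn_lip (hC0 j) (hFlip j) h n x y)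
      (AA_lip hmom (hFlip j)) (hh j) hK
  have hAA : ∀ (j : ℕ) (x : ℝ), HasDerivAt (AA β ν j) (AA β ν (j+1) x) x := by
    obtain ⟨h0, hh0⟩ := hae.exists
    intro j x
    have hball := key h0 hh0 (j+1) (Metric.closedBall x 1) (isCompact_closedBall x 1)
    have hball0 := key h0 hh0 j (Metric.closedBall x 1) (isCompact_closedBall x 1)
    exact hasDerivAt_of_tendstoUniformlyOn Metric.isOpen_ball
      (hball.mono Metric.ball_subset_closedBall)
      (Filter.Eventually.of_forall fun n y hy => hasDerivAt_Sn β h0 j n y)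
      (fun y hy => hball0.tendsto_at (Metric.ball_subset_closedBall hy))
      (Metric.mem_ball_self one_pos)
  have hGnEq : ∀ (h : ℕ → ℝ) (n : ℕ) (j : ℕ),
      iteratedDeriv j (Gn β h n) = fun x => QQ β j x - Sn β h j n x := by
    intro h n j
    apply iteratedDeriv_eq_of_chain (F := fun j x => QQ β j x - Sn β h j n x)
    · intro j x
      exact (hasDerivAt_QQ β j x).sub (hasDerivAt_Sn β h j n x)
    · funext x
      show Gn β h n x = QQ β 0 x - Sn β h 0 n x
      rw [Gn, Sn]
      rw [show QQ β 0 x = β / 2 * x ^ 2 from rfl]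
      congr 1
      rw [one_div, Fin.sum_univ_eq_sum_range (fun i => Real.log (Real.cosh (β * (x + h i)))) n]
      rfl
  have hGEq : ∀ j : ℕ, iteratedDeriv j (G β ν) = fun x => QQ β j x - AA β ν j x := by
    intro j
    apply iteratedDeriv_eq_of_chain (F := fun j x => QQ β j x - AA β ν j x)
    · intro j x; exact (hasDerivAt_QQ β j x).sub (hAA j x)
    · funext x; rfl
  filter_upwards [hae] with h hh j K hK
  have hu := key h hh j K hK
  have e1 : (fun n => iteratedDeriv j (Gn β h n)) = fun n x => QQ β j x - Sn β h j n x :=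
    funext fun n => hGnEq h n j
  rw [e1, hGEq j]
  rw [Metric.tendstoUniformlyOn_iff] at hu ⊢
  intro ε hε
  filter_upwards [hu ε hε] with n hn x hx
  have hd := hn x hx
  rw [Real.dist_eq] at hd ⊢
  have e2 : QQ β j x - AA β ν j x - (QQ β j x - Sn β h j n x)
      = -(AA β ν j x - Sn β h j n x) := by ring
  rw [e2, abs_neg]
  exact hd
end Aux2
end
end

section
/- Suppose ν has a finite absolute first moment. Then for μ-almost every realization h the following holds: for every global minimum m of G and every closed (possibly unbounded) subset V ⊆ ℝ containing no global minimum of G, there exists ε > 0 such that ∫_V exp(−n(G_n^h(s) − G(m))) ds ≤ exp(−n ε) for all sufficiently large n. -/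
open MeasureTheory ProbabilityTheory Real Filter Topology
open scoped ENNReal NNReal

noncomputable section

namespace RFCW

variable {ν : Measure ℝ} [IsProbabilityMeasure ν] {μ : Measure (ℕ → ℝ)}
  [IsProbabilityMeasure μ]

lemma pi_map_eval (n : ℕ) (k : Fin n) :
    (Measure.pi fun _ : Fin n => ν).map (fun x => x k) = ν := by
  ext s hs
  rw [Measure.map_apply (measurable_pi_apply k) hs]
  have h1 : (fun x : Fin n → ℝ => x k) ⁻¹' s
      = Set.pi Set.univ (Function.update (fun _ : Fin n => Set.univ) k s) := by
    rw [Set.eval_preimage]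
  rw [h1, Measure.pi_pi]
  rw [Fintype.prod_eq_single k (fun j hj => by simp [Function.update_of_ne hj])]
  simp

lemma pi_map_pair (n : ℕ) (i j : Fin n) (hij : i ≠ j) :
    (Measure.pi fun _ : Fin n => ν).map (fun x => (x i, x j)) = ν.prod ν := by
  refine (Measure.prod_eq fun s t hs ht => ?_).symm
  rw [Measure.map_apply ((measurable_pi_apply i).prodMk (measurable_pi_apply j)) (hs.prod ht)]
  have h1 : (fun x : Fin n → ℝ => (x i, x j)) ⁻¹' (s ×ˢ t)
      = Set.pi Set.univ (fun a => if a = i then s else if a = j then t else Set.univ) := by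
    ext x
    simp only [Set.mem_preimage, Set.mem_prod, Set.mem_pi, Set.mem_univ, true_implies]
    constructor
    · rintro ⟨h1, h2⟩ a
      split_ifs with ha hb
      · subst ha; exact h1
      · subst hb; exact h2
      · trivial
    · intro h
      refine ⟨by simpa using h i, ?_⟩
      have := h j
      rw [if_neg hij.symm, if_pos rfl] at this
      exact this
  rw [h1, Measure.pi_pi]
  rw [← Finset.prod_subset (Finset.subset_univ {i, j})
    (fun a _ ha => by
      simp only [Finset.mem_insert, Finset.mem_singleton, not_or] at ha
      simp [ha.1, ha.2])]
  rw [Finset.prod_pair hij, if_pos rfl, if_neg hij.symm, if_pos rfl]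

lemma map_eval (hμ : IsProductMeasure ν μ) (i : ℕ) :
    μ.map (fun h : ℕ → ℝ => h i) = ν := by
  have hπ : Measurable (fun h : ℕ → ℝ => fun k : Fin (i + 1) => h (k : ℕ)) :=
    measurable_pi_lambda _ (fun k => measurable_pi_apply _)
  have h1 : (fun h : ℕ → ℝ => h i)
      = (fun x : Fin (i + 1) → ℝ => x ⟨i, Nat.lt_succ_self i⟩)
        ∘ (fun h (k : Fin (i + 1)) => h (k : ℕ)) := rfl
  rw [h1, ← Measure.map_map (measurable_pi_apply _) hπ, hμ (i + 1), pi_map_eval]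

lemma map_pair (hμ : IsProductMeasure ν μ) {i j : ℕ} (hij : i ≠ j) :
    μ.map (fun h : ℕ → ℝ => (h i, h j)) = ν.prod ν := by
  set n := max i j + 1 with hn
  have hi : i < n := Nat.lt_succ_of_le (le_max_left i j)
  have hj : j < n := Nat.lt_succ_of_le (le_max_right i j)
  have hπ : Measurable (fun h : ℕ → ℝ => fun k : Fin n => h (k : ℕ)) :=
    measurable_pi_lambda _ (fun k => measurable_pi_apply _)
  have h1 : (fun h : ℕ → ℝ => (h i, h j))
      = (fun x : Fin n → ℝ => (x ⟨i, hi⟩, x ⟨j, hj⟩)) ∘ (fun h (k : Fin n) => h (k : ℕ)) := rfl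
  rw [h1, ← Measure.map_map ((measurable_pi_apply _).prodMk (measurable_pi_apply _)) hπ,
    hμ n, pi_map_pair]
  exact fun h => hij (by simpa using congrArg Fin.val h)

lemma indep_eval (hμ : IsProductMeasure ν μ) {i j : ℕ} (hij : i ≠ j) :
    IndepFun (fun h : ℕ → ℝ => h i) (fun h : ℕ → ℝ => h j) μ := by
  rw [indepFun_iff_map_prod_eq_prod_map_map (measurable_pi_apply i).aemeasurable
    (measurable_pi_apply j).aemeasurable]
  rw [map_eval hμ i, map_eval hμ j, map_pair hμ hij]

lemma slln (hμ : IsProductMeasure ν μ) (f : ℝ → ℝ) (hf : Measurable f)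
    (hint : Integrable f ν) :
    ∀ᵐ h ∂μ, Tendsto (fun n : ℕ => (∑ i ∈ Finset.range n, f (h i)) / n) atTop
      (𝓝 (∫ x, f x ∂ν)) := by
  have hX : ∀ i : ℕ, Measurable fun h : ℕ → ℝ => f (h i) :=
    fun i => hf.comp (measurable_pi_apply i)
  have hmap : ∀ i : ℕ, μ.map (fun h : ℕ → ℝ => f (h i)) = ν.map f := by
    intro i
    rw [show (fun h : ℕ → ℝ => f (h i)) = f ∘ (fun h : ℕ → ℝ => h i) from rfl,
      ← Measure.map_map hf (measurable_pi_apply i), map_eval hμ i]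
  have hident : ∀ i : ℕ, IdentDistrib (fun h : ℕ → ℝ => f (h i))
      (fun h : ℕ → ℝ => f (h 0)) μ μ :=
    fun i => ⟨(hX i).aemeasurable, (hX 0).aemeasurable, by rw [hmap i, hmap 0]⟩
  have hindep : Pairwise (Function.onFun (IndepFun · · μ) fun (i : ℕ) (h : ℕ → ℝ) => f (h i)) := by
    intro i j hij
    exact (indep_eval hμ hij).comp hf hf
  have hint0 : Integrable (fun h : ℕ → ℝ => f (h 0)) μ := by
    have h2 : Integrable f (μ.map (fun h : ℕ → ℝ => h 0)) := by
      rw [map_eval hμ 0]; exact hint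
    exact (integrable_map_measure hf.aestronglyMeasurable
      (measurable_pi_apply 0).aemeasurable).mp h2
  have h3 := strong_law_ae_real _ hint0 hindep hident
  have hI : ∫ h, f (h 0) ∂μ = ∫ x, f x ∂ν := by
    rw [← integral_map (measurable_pi_apply 0).aemeasurable hf.aestronglyMeasurable,
      map_eval hμ 0]
  rw [hI] at h3
  exact h3



def L (x : ℝ) : ℝ := Real.log (Real.cosh x)

lemma hasDerivAt_L (x : ℝ) : HasDerivAt L (Real.tanh x) x := by
  have h2 := (Real.hasDerivAt_cosh x).log (ne_of_gt (Real.cosh_pos x))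
  show HasDerivAt (fun y => Real.log (Real.cosh y)) (Real.tanh x) x
  simpa [L, Real.tanh_eq_sinh_div_cosh] using h2

lemma abs_tanh_le_one (x : ℝ) : |Real.tanh x| ≤ 1 := by
  rw [Real.tanh_eq_sinh_div_cosh, abs_div, abs_of_pos (Real.cosh_pos x),
    div_le_one (Real.cosh_pos x)]
  rcases abs_cases (Real.sinh x) with ⟨h, _⟩ | ⟨h, _⟩
  · rw [h]; exact (Real.sinh_lt_cosh x).le
  · rw [h, ← Real.sinh_neg]
    simpa using (Real.sinh_lt_cosh (-x)).le

lemma lipschitz_L : LipschitzWith 1 L := by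
  apply lipschitzWith_of_nnnorm_deriv_le (fun x => (hasDerivAt_L x).differentiableAt)
  intro x
  rw [(hasDerivAt_L x).deriv]
  simpa [← NNReal.coe_le_coe] using abs_tanh_le_one x

lemma abs_L_sub_L (x y : ℝ) : |L x - L y| ≤ |x - y| := by
  simpa [Real.dist_eq] using lipschitz_L.dist_le_mul x y

lemma L_nonneg (x : ℝ) : 0 ≤ L x := Real.log_nonneg (Real.one_le_cosh x)

lemma abs_L_le (x : ℝ) : |L x| ≤ |x| := by
  have := abs_L_sub_L x 0
  simpa [L] using this

/-- The integral part of `G`. -/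
def F (β : ℝ) (ν : Measure ℝ) (x : ℝ) : ℝ := ∫ t, L (β * (x + t)) ∂ν

lemma G_eq (β : ℝ) (ν : Measure ℝ) (x : ℝ) : G β ν x = β / 2 * x ^ 2 - F β ν x := rfl

/-- The finite-volume integral part. -/
def Fn (β : ℝ) (h : ℕ → ℝ) (n : ℕ) (x : ℝ) : ℝ :=
  (1 / n : ℝ) * ∑ i : Fin n, L (β * (x + h i))

lemma Gn_eq (β : ℝ) (h : ℕ → ℝ) (n : ℕ) (x : ℝ) :
    Gn β h n x = β / 2 * x ^ 2 - Fn β h n x := rfl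

lemma Fn_eq_range (β : ℝ) (h : ℕ → ℝ) (n : ℕ) (x : ℝ) :
    Fn β h n x = (∑ i ∈ Finset.range n, L (β * (x + h i))) / n := by
  rw [Fn, Fin.sum_univ_eq_sum_range (fun i => L (β * (x + h i))) n, one_div,
    inv_mul_eq_div]

variable {β : ℝ} {ν : Measure ℝ} [IsProbabilityMeasure ν]

lemma integrable_L (hβ : 0 < β) (hmom : Integrable (fun x : ℝ => |x|) ν) (x : ℝ) :
    Integrable (fun t => L (β * (x + t))) ν := by
  have hcont : Continuous fun t : ℝ => L (β * (x + t)) :=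
    lipschitz_L.continuous.comp (by continuity)
  refine Integrable.mono' ((integrable_const (β * |x|)).add (hmom.const_mul β))
    hcont.aestronglyMeasurable ?_
  filter_upwards with t
  rw [Real.norm_eq_abs]
  calc |L (β * (x + t))| ≤ |β * (x + t)| := abs_L_le _
    _ ≤ β * |x| + β * |t| := by
        rw [abs_mul, abs_of_pos hβ, ← mul_add]
        exact mul_le_mul_of_nonneg_left (abs_add_le x t) hβ.le

lemma F_le (hβ : 0 < β) (hmom : Integrable (fun x : ℝ => |x|) ν) (x : ℝ) :
    F β ν x ≤ β * |x| + β * ∫ t, |t| ∂ν := by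
  have h1 : F β ν x ≤ ∫ t, (β * |x| + β * |t|) ∂ν := by
    refine integral_mono (integrable_L hβ hmom x)
      ((integrable_const (β * |x|)).add (hmom.const_mul β)) (fun t => ?_)
    calc L (β * (x + t)) ≤ |L (β * (x + t))| := le_abs_self _
      _ ≤ |β * (x + t)| := abs_L_le _
      _ ≤ β * |x| + β * |t| := by
          rw [abs_mul, abs_of_pos hβ, ← mul_add]
          exact mul_le_mul_of_nonneg_left (abs_add_le x t) hβ.le
  calc F β ν x ≤ ∫ t, (β * |x| + β * |t|) ∂ν := h1
    _ = β * |x| + β * ∫ t, |t| ∂ν := by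
        rw [integral_add (integrable_const _) (hmom.const_mul β), integral_const,
          integral_const_mul]
        simp

lemma F_nonneg (x : ℝ) : 0 ≤ F β ν x :=
  integral_nonneg fun t => L_nonneg _

lemma abs_F_sub_F (hβ : 0 < β) (hmom : Integrable (fun x : ℝ => |x|) ν) (x y : ℝ) :
    |F β ν x - F β ν y| ≤ β * |x - y| := by
  rw [F, F, ← integral_sub (integrable_L hβ hmom x) (integrable_L hβ hmom y)]
  have h1 : |∫ t, (L (β * (x + t)) - L (β * (y + t))) ∂ν|
      ≤ ∫ t, |L (β * (x + t)) - L (β * (y + t))| ∂ν := by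
    simpa [Real.norm_eq_abs] using
      norm_integral_le_integral_norm (fun t => L (β * (x + t)) - L (β * (y + t))) (μ := ν)
  refine h1.trans ?_
  have h2 : ∫ t, |L (β * (x + t)) - L (β * (y + t))| ∂ν ≤ ∫ _t, β * |x - y| ∂ν := by
    refine integral_mono_of_nonneg (Eventually.of_forall fun t => abs_nonneg _)
      (integrable_const _) (Eventually.of_forall fun t => ?_)
    calc |L (β * (x + t)) - L (β * (y + t))| ≤ |β * (x + t) - β * (y + t)| := abs_L_sub_L _ _
      _ = β * |x - y| := by
          rw [← mul_sub, abs_mul, abs_of_pos hβ]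
          ring_nf
  simpa using h2

lemma continuous_G (hβ : 0 < β) (hmom : Integrable (fun x : ℝ => |x|) ν) :
    Continuous (G β ν) := by
  have hF : Continuous (F β ν) := by
    have : LipschitzWith β.toNNReal (F β ν) := by
      rw [lipschitzWith_iff_dist_le_mul]
      intro x y
      rw [Real.dist_eq, Real.dist_eq, Real.coe_toNNReal β hβ.le]
      exact abs_F_sub_F hβ hmom x y
    exact this.continuous
  exact (continuous_const.mul (continuous_pow 2)).sub hF

lemma abs_Fn_sub_Fn (hβ : 0 < β) (h : ℕ → ℝ) (n : ℕ) (x y : ℝ) :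
    |Fn β h n x - Fn β h n y| ≤ β * |x - y| := by
  rcases Nat.eq_zero_or_pos n with rfl | hn
  · simp [Fn]
    positivity
  · rw [Fn, Fn, ← mul_sub, ← Finset.sum_sub_distrib]
    rw [abs_mul]
    have h1 : |∑ i : Fin n, (L (β * (x + h i)) - L (β * (y + h i)))|
        ≤ ∑ i : Fin n, (β * |x - y|) := by
      refine (Finset.abs_sum_le_sum_abs _ _).trans (Finset.sum_le_sum fun i _ => ?_)
      calc |L (β * (x + h i)) - L (β * (y + h i))|
          ≤ |β * (x + h i) - β * (y + h i)| := abs_L_sub_L _ _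
        _ = β * |x - y| := by rw [← mul_sub, abs_mul, abs_of_pos hβ]; ring_nf
    have h2 : |(1 / n : ℝ)| = 1 / n := abs_of_pos (by positivity)
    rw [h2]
    calc (1 / n : ℝ) * |∑ i : Fin n, (L (β * (x + h i)) - L (β * (y + h i)))|
        ≤ (1 / n : ℝ) * (n * (β * |x - y|)) := by
          refine mul_le_mul_of_nonneg_left ?_ (by positivity)
          simpa [Finset.sum_const, Finset.card_univ, nsmul_eq_mul] using h1
      _ = β * |x - y| := by
          field_simp
  
/-- average of |h i| -/
def An (h : ℕ → ℝ) (n : ℕ) : ℝ := (∑ i ∈ Finset.range n, |h i|) / n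

lemma Fn_le (hβ : 0 < β) (h : ℕ → ℝ) (n : ℕ) (x : ℝ) :
    Fn β h n x ≤ β * |x| + β * An h n := by
  rcases Nat.eq_zero_or_pos n with rfl | hn
  · simp [Fn, An]
    positivity
  · have h1 : ∑ i : Fin n, L (β * (x + h i)) ≤ ∑ i : Fin n, (β * |x| + β * |h i|) := by
      refine Finset.sum_le_sum fun i _ => ?_
      calc L (β * (x + h i)) ≤ |L (β * (x + h i))| := le_abs_self _
        _ ≤ |β * (x + h i)| := abs_L_le _
        _ ≤ β * |x| + β * |h i| := by
            rw [abs_mul, abs_of_pos hβ, ← mul_add]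
            exact mul_le_mul_of_nonneg_left (abs_add_le x _) hβ.le
    have h2 : Fn β h n x ≤ (1 / n : ℝ) * ∑ i : Fin n, (β * |x| + β * |h i|) :=
      mul_le_mul_of_nonneg_left h1 (by positivity)
    refine h2.trans (le_of_eq ?_)
    rw [Finset.sum_add_distrib, Finset.sum_const, Finset.card_univ, Fintype.card_fin,
      ← Finset.mul_sum, Fin.sum_univ_eq_sum_range (fun i => |h i|) n]
    rw [An]
    have hn' : (n : ℝ) ≠ 0 := Nat.cast_ne_zero.2 hn.ne'
    field_simp
    ring

lemma Gn_ge (hβ : 0 < β) (h : ℕ → ℝ) (n : ℕ) (x : ℝ) :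
    β / 2 * x ^ 2 - β * |x| - β * An h n ≤ Gn β h n x := by
  rw [Gn_eq]
  have := Fn_le hβ h n x
  linarith

lemma G_ge (hβ : 0 < β) (hmom : Integrable (fun x : ℝ => |x|) ν) (x : ℝ) :
    β / 2 * x ^ 2 - β * |x| - β * ∫ t, |t| ∂ν ≤ G β ν x := by
  rw [G_eq]
  have := F_le hβ hmom x
  linarith

set_option maxHeartbeats 1000000 in
lemma main_det (hβ : 0 < β) (hmom : Integrable (fun x : ℝ => |x|) ν) (h : ℕ → ℝ)
    (hq : ∀ q : ℚ, Tendsto (fun n : ℕ => Fn β h n (q : ℝ)) atTop (𝓝 (F β ν (q : ℝ))))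
    (hA : Tendsto (An h) atTop (𝓝 (∫ t, |t| ∂ν)))
    (m : ℝ) (hm : ∀ w : ℝ, G β ν m ≤ G β ν w)
    (V : Set ℝ) (hVc : IsClosed V) (hV : ∀ y ∈ V, ∃ w : ℝ, G β ν w < G β ν y) :
    ∃ ε > (0 : ℝ), ∀ᶠ n : ℕ in atTop,
      (∫ s in V, Real.exp (-(n : ℝ) * (Gn β h n s - G β ν m))) ≤
        Real.exp (-(n : ℝ) * ε) := by
  set M : ℝ := ∫ t, |t| ∂ν with hMdef
  have hM : 0 ≤ M := integral_nonneg fun t => abs_nonneg t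
  rcases V.eq_empty_or_nonempty with rfl | ⟨v0, hv0⟩
  · exact ⟨1, one_pos, Eventually.of_forall fun n => by
      simp [Measure.restrict_empty]
      positivity⟩
  have hGcont := continuous_G hβ hmom
  set c : ℝ := G β ν v0 with hcdef
  set R0 : ℝ := max 4 ((c + β * M) / β + 1) with hR0def
  have hbdd : ∀ x : ℝ, G β ν x ≤ c → |x| ≤ R0 := by
    intro x hx
    by_contra hcon
    push_neg at hcon
    have h4 : (4 : ℝ) ≤ |x| := le_trans (le_max_left _ _) hcon.le
    have h5 : (c + β * M) / β + 1 ≤ |x| := le_trans (le_max_right _ _) hcon.le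
    have hG := G_ge hβ hmom x
    have h6 : c + β * M + β ≤ β * |x| := by
      have h7 := mul_le_mul_of_nonneg_left h5 hβ.le
      rw [mul_add, mul_one, mul_div_cancel₀ _ hβ.ne'] at h7
      linarith
    have h7 : 2 * β * |x| ≤ β / 2 * x ^ 2 := by
      nlinarith [sq_abs x, mul_nonneg (mul_nonneg hβ.le (abs_nonneg x)) (sub_nonneg.2 h4)]
    rw [← hMdef] at hG
    linarith
  set K : Set ℝ := V ∩ {x | G β ν x ≤ c} with hKdef
  have hKc : IsCompact K := by
    have hcl : IsClosed K := hVc.inter (isClosed_le hGcont continuous_const)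
    have hsub : K ⊆ Set.Icc (-R0) R0 := fun x hx => abs_le.1 (hbdd x hx.2)
    exact isCompact_Icc.of_isClosed_subset hcl hsub
  have hKne : K.Nonempty := ⟨v0, hv0, by simp [hcdef]⟩
  obtain ⟨y0, hy0K, hy0min⟩ := hKc.exists_isMinOn hKne hGcont.continuousOn
  obtain ⟨w, hw⟩ := hV y0 hy0K.1
  have hgap : G β ν m < G β ν y0 := lt_of_le_of_lt (hm w) hw
  set a : ℝ := (G β ν y0 - G β ν m) / 3 with hadef
  have ha : 0 < a := by rw [hadef]; linarith
  have h3a : 3 * a = G β ν y0 - G β ν m := by rw [hadef]; ring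
  have hVlow : ∀ y ∈ V, G β ν m + 3 * a ≤ G β ν y := by
    intro y hy
    rcases le_or_gt (G β ν y) c with h1 | h1
    · have h2 : G β ν y0 ≤ G β ν y := isMinOn_iff.1 hy0min y ⟨hy, h1⟩
      linarith
    · have h2 : G β ν y0 ≤ c := hy0K.2
      linarith
  -- tail radius
  set R : ℝ := max 8 ((β * (M + 1) + G β ν m + 1) / β + 1) with hRdef
  have hRtail : ∀ (s A : ℝ), A ≤ M + 1 → R ≤ |s| →
      1 + β / 4 * s ^ 2 ≤ β / 2 * s ^ 2 - β * |s| - β * A - G β ν m := by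
    intro s A hA' hs
    have h8 : (8 : ℝ) ≤ |s| := le_trans (le_max_left _ _) hs
    have h5 : (β * (M + 1) + G β ν m + 1) / β + 1 ≤ |s| := le_trans (le_max_right _ _) hs
    have h6 : β * (M + 1) + G β ν m + 1 + β ≤ β * |s| := by
      have h7 := mul_le_mul_of_nonneg_left h5 hβ.le
      rw [mul_add, mul_one, mul_div_cancel₀ _ hβ.ne'] at h7
      linarith
    have h9 : 2 * β * |s| ≤ β / 4 * s ^ 2 := by
      nlinarith [sq_abs s, mul_nonneg (mul_nonneg hβ.le (abs_nonneg s)) (sub_nonneg.2 h8)]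
    have h10 : β * A ≤ β * (M + 1) := mul_le_mul_of_nonneg_left hA' hβ.le
    nlinarith [sq_abs s]
  -- uniform closeness on the compact part
  set δ : ℝ := a / (4 * β + 4) with hδdef
  have hδ : 0 < δ := by rw [hδdef]; positivity
  have hcover : Set.Icc (-R) R ⊆ ⋃ q : ℚ, Metric.ball (q : ℝ) δ := by
    intro x _
    obtain ⟨q, hq'⟩ := exists_rat_near x hδ
    exact Set.mem_iUnion.2 ⟨q, by rwa [Metric.mem_ball, Real.dist_eq]⟩
  obtain ⟨T, hT⟩ := isCompact_Icc.elim_finite_subcover (fun q : ℚ => Metric.ball (q : ℝ) δ)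
    (fun q => Metric.isOpen_ball) hcover
  have hev1 : ∀ᶠ n : ℕ in atTop, ∀ q ∈ T, |Fn β h n (q : ℝ) - F β ν (q : ℝ)| < a / 2 := by
    rw [eventually_all_finset]
    intro q hqT
    obtain ⟨N, hN⟩ := Metric.tendsto_atTop.1 (hq q) (a / 2) (half_pos ha)
    rw [eventually_atTop]
    exact ⟨N, fun n hn => by have := hN n hn; rwa [Real.dist_eq] at this⟩
  have hunif : ∀ᶠ n : ℕ in atTop, ∀ s ∈ Set.Icc (-R) R, |Fn β h n s - F β ν s| ≤ a := by
    filter_upwards [hev1] with n hn s hs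
    obtain ⟨q, hqT, hsq⟩ : ∃ q ∈ T, s ∈ Metric.ball (q : ℝ) δ := by
      have := hT hs
      simpa using this
    rw [Metric.mem_ball, Real.dist_eq] at hsq
    have h1 : |Fn β h n s - Fn β h n (q : ℝ)| ≤ β * δ :=
      (abs_Fn_sub_Fn hβ h n s q).trans (mul_le_mul_of_nonneg_left hsq.le hβ.le)
    have h2 : |F β ν (q : ℝ) - F β ν s| ≤ β * δ := by
      refine (abs_F_sub_F hβ hmom (q : ℝ) s).trans ?_
      rw [abs_sub_comm]
      exact mul_le_mul_of_nonneg_left hsq.le hβ.le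
    have h3 := hn q hqT
    have h6 : 2 * (β * δ) ≤ a / 2 := by
      have h7 : (0 : ℝ) < 4 * β + 4 := by positivity
      have h8 : 2 * β / (4 * β + 4) ≤ 1 / 2 := by
        rw [div_le_div_iff₀ h7 two_pos]; linarith
      calc 2 * (β * δ) = a * (2 * β / (4 * β + 4)) := by rw [hδdef]; ring
        _ ≤ a * (1 / 2) := mul_le_mul_of_nonneg_left h8 ha.le
        _ = a / 2 := by ring
    have h9 : Fn β h n s - F β ν s = (Fn β h n s - Fn β h n (q : ℝ))
        + (Fn β h n (q : ℝ) - F β ν (q : ℝ)) + (F β ν (q : ℝ) - F β ν s) := by ring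
    have hA1 := abs_add_le (Fn β h n s - Fn β h n (q : ℝ)) (Fn β h n (q : ℝ) - F β ν (q : ℝ))
    have hA2 := abs_add_le (Fn β h n s - Fn β h n (q : ℝ) + (Fn β h n (q : ℝ) - F β ν (q : ℝ))) (F β ν (q : ℝ) - F β ν s)
    rw [h9]
    linarith
  have hevA : ∀ᶠ n : ℕ in atTop, An h n ≤ M + 1 := by
    obtain ⟨N, hN⟩ := Metric.tendsto_atTop.1 hA 1 one_pos
    rw [eventually_atTop]
    refine ⟨N, fun n hn => ?_⟩
    have := hN n hn
    rw [Real.dist_eq] at this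
    have h2 := (abs_lt.1 this).2
    linarith
  -- the dominating function
  set c0 : ℝ := min (2 * a) 1 with hc0def
  have hc0 : 0 < c0 := lt_min (by linarith) one_pos
  have hc01 : c0 ≤ 1 := min_le_right _ _
  have hc02a : c0 ≤ 2 * a := min_le_left _ _
  set ψ : ℝ → ℝ := fun s => Set.indicator (Set.Icc (-R) R) (fun _ => (1 : ℝ)) s
    + Real.exp (-(β / 4) * s ^ 2) with hψdef
  have hψint : Integrable ψ := by
    refine Integrable.add ?_ (integrable_exp_neg_mul_sq (by positivity))
    rw [integrable_indicator_iff measurableSet_Icc]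
    exact integrableOn_const measure_Icc_lt_top.ne
  have hψnn : ∀ s, 0 ≤ ψ s := fun s =>
    add_nonneg (Set.indicator_nonneg (fun _ _ => zero_le_one) s) (Real.exp_pos _).le
  have hψ1 : ∀ s ∈ Set.Icc (-R) R, 1 ≤ ψ s := by
    intro s hs
    rw [hψdef]
    simp only [Set.indicator_of_mem hs]
    linarith [(Real.exp_pos (-(β / 4) * s ^ 2)).le]
  have hψexp : ∀ s, Real.exp (-(β / 4) * s ^ 2) ≤ ψ s := fun s => by
    rw [hψdef]
    simp only
    linarith [Set.indicator_nonneg (fun _ _ => (zero_le_one : (0:ℝ) ≤ 1))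
      (s := Set.Icc (-R) R) s]
  set C0 : ℝ := ∫ s, ψ s with hC0def
  have hevC : ∀ᶠ n : ℕ in atTop, C0 ≤ Real.exp ((n : ℝ) * (c0 / 2)) := by
    have h1 : Tendsto (fun n : ℕ => (n : ℝ) * (c0 / 2)) atTop atTop :=
      Tendsto.atTop_mul_const (by positivity) tendsto_natCast_atTop_atTop
    exact (Real.tendsto_exp_atTop.comp h1).eventually_ge_atTop C0
  refine ⟨c0 / 2, by positivity, ?_⟩
  filter_upwards [hunif, hevA, hevC, eventually_ge_atTop 1] with n hn hAn hC hn1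
  have hn1' : (1 : ℝ) ≤ (n : ℝ) := by exact_mod_cast hn1
  have hpoint : ∀ s : ℝ, Set.indicator V
      (fun s => Real.exp (-(n : ℝ) * (Gn β h n s - G β ν m))) s
      ≤ Real.exp (-(n : ℝ) * c0) * ψ s := by
    intro s
    by_cases hsV : s ∈ V
    · rw [Set.indicator_of_mem hsV]
      by_cases hsR : s ∈ Set.Icc (-R) R
      · have e1 : G β ν m + 3 * a ≤ G β ν s := hVlow s hsV
        have e2 : |Fn β h n s - F β ν s| ≤ a := hn s hsR
        have e3 : F β ν s - Fn β h n s ≥ -a := by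
          have := abs_le.1 e2
          linarith [this.1]
        have e4 : c0 ≤ Gn β h n s - G β ν m := by
          have e5 : Gn β h n s = G β ν s + (F β ν s - Fn β h n s) := by
            rw [Gn_eq, G_eq]; ring
          rw [e5]
          linarith
        calc Real.exp (-(n : ℝ) * (Gn β h n s - G β ν m)) ≤ Real.exp (-(n : ℝ) * c0) := by
              apply Real.exp_le_exp.2
              have hnn : (0 : ℝ) ≤ (n : ℝ) := Nat.cast_nonneg n
              have := mul_le_mul_of_nonneg_left e4 hnn
              linarith
          _ ≤ Real.exp (-(n : ℝ) * c0) * ψ s :=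
              le_mul_of_one_le_right (Real.exp_pos _).le (hψ1 s hsR)
      · have hsR' : R < |s| := by
          by_contra hh
          exact hsR (abs_le.1 (not_lt.1 hh))
        have e3 := hRtail s (An h n) hAn hsR'.le
        have e4 := Gn_ge hβ h n s
        have e5 : 1 + β / 4 * s ^ 2 ≤ Gn β h n s - G β ν m := by linarith
        have e6 : -(n : ℝ) * (Gn β h n s - G β ν m) ≤ -(n : ℝ) * c0 + -(β / 4) * s ^ 2 := by
          have hs2 : (0 : ℝ) ≤ β / 4 * s ^ 2 := by positivity
          have hnn : (0 : ℝ) ≤ (n : ℝ) := Nat.cast_nonneg n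
          have e7 : (n : ℝ) * 1 + (n : ℝ) * (β / 4 * s ^ 2)
              ≤ (n : ℝ) * (Gn β h n s - G β ν m) := by
            have e7' := mul_le_mul_of_nonneg_left e5 hnn
            rw [mul_add] at e7'
            exact e7'
          have e8 : (n : ℝ) * c0 ≤ (n : ℝ) * 1 := mul_le_mul_of_nonneg_left hc01 hnn
          have e9 : 1 * (β / 4 * s ^ 2) ≤ (n : ℝ) * (β / 4 * s ^ 2) :=
            mul_le_mul_of_nonneg_right hn1' hs2
          nlinarith [e7, e8, e9]
        calc Real.exp (-(n : ℝ) * (Gn β h n s - G β ν m))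
            ≤ Real.exp (-(n : ℝ) * c0 + -(β / 4) * s ^ 2) := Real.exp_le_exp.2 e6
          _ = Real.exp (-(n : ℝ) * c0) * Real.exp (-(β / 4) * s ^ 2) := Real.exp_add _ _
          _ ≤ Real.exp (-(n : ℝ) * c0) * ψ s :=
              mul_le_mul_of_nonneg_left (hψexp s) (Real.exp_pos _).le
    · rw [Set.indicator_of_notMem hsV]
      exact mul_nonneg (Real.exp_pos _).le (hψnn s)
  calc (∫ s in V, Real.exp (-(n : ℝ) * (Gn β h n s - G β ν m)))
      = ∫ s, Set.indicator V (fun s => Real.exp (-(n : ℝ) * (Gn β h n s - G β ν m))) s := by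
        rw [integral_indicator hVc.measurableSet]
    _ ≤ ∫ s, Real.exp (-(n : ℝ) * c0) * ψ s := by
        refine integral_mono_of_nonneg ?_ (hψint.const_mul _) (Eventually.of_forall hpoint)
        exact Eventually.of_forall fun s =>
          Set.indicator_nonneg (fun _ _ => (Real.exp_pos _).le) s
    _ = Real.exp (-(n : ℝ) * c0) * C0 := by rw [integral_const_mul, hC0def]
    _ ≤ Real.exp (-(n : ℝ) * c0) * Real.exp ((n : ℝ) * (c0 / 2)) :=
        mul_le_mul_of_nonneg_left hC (Real.exp_pos _).le
    _ = Real.exp (-(n : ℝ) * (c0 / 2)) := by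
        rw [← Real.exp_add]
        ring_nf

end RFCW

/-- Exponential smallness of the integral away from the global minima
(Lemma 5.3 (ii) of the paper). -/
theorem integral_away_from_minima
    (β : ℝ) (hβ : 0 < β) (ν : Measure ℝ) [IsProbabilityMeasure ν]
    (hmom : Integrable (fun x : ℝ => |x|) ν)
    (μ : Measure (ℕ → ℝ)) [IsProbabilityMeasure μ] (hμ : IsProductMeasure ν μ) :
    ∀ᵐ h ∂μ, ∀ m : ℝ, (∀ w : ℝ, G β ν m ≤ G β ν w) →
      ∀ V : Set ℝ, IsClosed V → (∀ y ∈ V, ∃ w : ℝ, G β ν w < G β ν y) →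
        ∃ ε > (0 : ℝ), ∀ᶠ n : ℕ in atTop,
          (∫ s in V, Real.exp (-(n : ℝ) * (Gn β h n s - G β ν m))) ≤
            Real.exp (-(n : ℝ) * ε) := by
  have habs : Measurable fun x : ℝ => |x| := continuous_abs.measurable
  have hq_all : ∀ᵐ h ∂μ, ∀ q : ℚ,
      Tendsto (fun n : ℕ => RFCW.Fn β h n (q : ℝ)) atTop (𝓝 (RFCW.F β ν (q : ℝ))) := by
    rw [ae_all_iff]
    intro q
    have hmeas : Measurable fun t : ℝ => RFCW.L (β * ((q : ℝ) + t)) :=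
      (RFCW.lipschitz_L.continuous.comp (by continuity)).measurable
    filter_upwards [RFCW.slln hμ _ hmeas (RFCW.integrable_L hβ hmom (q : ℝ))] with h hh
    have he : (fun n : ℕ => RFCW.Fn β h n (q : ℝ))
        = fun n : ℕ => (∑ i ∈ Finset.range n, RFCW.L (β * ((q : ℝ) + h i))) / n :=
      funext fun n => RFCW.Fn_eq_range β h n (q : ℝ)
    rw [he]
    exact hh
  have hA_all : ∀ᵐ h ∂μ, Tendsto (RFCW.An h) atTop (𝓝 (∫ t, |t| ∂ν)) := by
    filter_upwards [RFCW.slln hμ (fun x => |x|) habs hmom] with h hh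
    exact hh
  filter_upwards [hq_all, hA_all] with h hq hA
  intro m hm V hVc hV
  exact RFCW.main_det hβ hmom h hq hA m hm V hVc hV
end
end

section
/- Let k ≥ 1, λ > 0, a > 0, and fix α with 1 − 1/(2(2k−1)) < α < 1. Let (f_n) be a sequence of measurable functions ℝ → ℝ such that for all sufficiently large n one has f_n(s) ≥ P_{2k}(s) for all s ∈ [−a n^{1−α}, a n^{1−α}], where P_{2k}(s) = (λ/(2·(2k)!)) s^{2k} − Σ_{i=1}^{2k−1} |s|^i. Then for every K > 0 and every Borel set B ⊆ ℝ: limsup_n (1/n^{1−2k(1−α)}) ln ∫_{ {s ∈ B : K < |s| ≤ a n^{1−α}} } exp( −n^{1−2k(1−α)} f_n(s) ) ds ≤ − inf_{|s| > K} P_{2k}(s). -/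
open MeasureTheory ProbabilityTheory Real Filter Topology
open scoped ENNReal NNReal

noncomputable section

lemma elog_ofReal_le {x y : ℝ} (h : x ≤ y) (hy : 0 < y) :
    elog (ENNReal.ofReal x) ≤ ((Real.log y : ℝ) : EReal) := by
  unfold elog
  rcases le_or_gt x 0 with hx | hx
  · simp [ENNReal.ofReal_eq_zero.2 hx]
  · rw [if_neg (by simp [hx.not_ge]), if_neg ENNReal.ofReal_ne_top,
      ENNReal.toReal_ofReal hx.le]
    exact_mod_cast Real.log_le_log hx h

lemma ereal_mul_le {c y : ℝ} (hc : 0 ≤ c) {x : EReal} (h : x ≤ (y : EReal)) :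
    (c : EReal) * x ≤ ((c * y : ℝ) : EReal) := by
  induction x with
  | bot =>
    rcases eq_or_lt_of_le hc with hc0 | hc0
    · simp [← hc0]
    · rw [EReal.coe_mul_bot_of_pos hc0]; exact bot_le
  | coe z =>
    rw [← EReal.coe_mul]
    exact_mod_cast mul_le_mul_of_nonneg_left (by exact_mod_cast h) hc
  | top => exact absurd h (by simp)

set_option maxHeartbeats 1000000 in
/-- Deterministic Laplace-type upper bound away from the origin
(display (6.6) of the paper). -/
theorem laplace_upper_bound_away
    (k : ℕ) (hk : 1 ≤ k) (l : ℝ) (hl : 0 < l) (a : ℝ) (ha : 0 < a)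
    (α : ℝ) (hα1 : 1 - 1 / (2 * (2 * (k : ℝ) - 1)) < α) (hα2 : α < 1)
    (f : ℕ → ℝ → ℝ) (hf : ∀ n, Measurable (f n))
    (hbound : ∀ᶠ n : ℕ in atTop, ∀ s : ℝ,
      s ∈ Set.Icc (-(a * (n : ℝ) ^ (1 - α))) (a * (n : ℝ) ^ (1 - α)) → P2k l k s ≤ f n s) :
    ∀ K > (0 : ℝ), ∀ B : Set ℝ, MeasurableSet B →
      limsup (fun n : ℕ => ((((n : ℝ) ^ (1 - 2 * (k : ℝ) * (1 - α)))⁻¹ : ℝ) : EReal) *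
          elog (ENNReal.ofReal
            (∫ s in {s : ℝ | s ∈ B ∧ K < |s| ∧ |s| ≤ a * (n : ℝ) ^ (1 - α)},
              Real.exp (-(n : ℝ) ^ (1 - 2 * (k : ℝ) * (1 - α)) * f n s)))) atTop ≤
        -(⨅ s ∈ {s : ℝ | K < |s|}, ((P2k l k s : ℝ) : EReal)) := by
  intro K hK B hB
  have hk1 : (1 : ℝ) ≤ (k : ℝ) := by exact_mod_cast hk
  set β : ℝ := 1 - 2 * (k : ℝ) * (1 - α) with hβdef
  have h2k1 : (0 : ℝ) < 2 * (k : ℝ) - 1 := by linarith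
  have hu : 0 < 1 - α := by linarith
  have hβpos : 0 < β := by
    have hd : (0:ℝ) < 2 * (2 * (k:ℝ) - 1) := by linarith
    have h1 : (1 - α) * (2 * (2 * (k : ℝ) - 1)) < 1 :=
      (lt_div_iff₀ hd).1 (by linarith)
    nlinarith
  set J : EReal := ⨅ s ∈ {s : ℝ | K < |s|}, ((P2k l k s : ℝ) : EReal) with hJdef
  rcases eq_or_ne J ⊥ with hJ | hJ
  · rw [hJ]; simp
  -- J is a real number
  have hmem : (K + 1) ∈ {s : ℝ | K < |s|} := by
    simp only [Set.mem_setOf_eq, abs_of_pos (by linarith : (0:ℝ) < K + 1)]; linarith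
  have hJle : J ≤ ((P2k l k (K + 1) : ℝ) : EReal) := by
    exact iInf₂_le (K + 1) hmem
  have hJtop : J ≠ ⊤ := ne_top_of_le_ne_top (EReal.coe_ne_top _) hJle
  set m : ℝ := J.toReal with hmdef
  have hm : (m : EReal) = J := EReal.coe_toReal hJtop hJ
  have hmle : ∀ s ∈ {s : ℝ | K < |s|}, m ≤ P2k l k s := by
    intro s hs
    have : J ≤ ((P2k l k s : ℝ) : EReal) := iInf₂_le s hs
    rw [← hm] at this
    exact_mod_cast this
  -- the bounding sequence
  set g : ℕ → ℝ := fun n => -m + ((n : ℝ) ^ β)⁻¹ * Real.log (2 * (a * (n : ℝ) ^ (1 - α)))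
    with hgdef
  -- eventual bound
  have hev : ∀ᶠ n : ℕ in atTop,
      ((((n : ℝ) ^ β)⁻¹ : ℝ) : EReal) *
          elog (ENNReal.ofReal
            (∫ s in {s : ℝ | s ∈ B ∧ K < |s| ∧ |s| ≤ a * (n : ℝ) ^ (1 - α)},
              Real.exp (-(n : ℝ) ^ β * f n s))) ≤ ((g n : ℝ) : EReal) := by
    filter_upwards [hbound, eventually_ge_atTop 1] with n hfn hn1
    have hnpos : (0 : ℝ) < (n : ℝ) := by exact_mod_cast hn1
    set R : ℝ := a * (n : ℝ) ^ (1 - α) with hRdef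
    have hRpos : 0 < R := by positivity
    set γ : ℝ := (n : ℝ) ^ β with hγdef
    have hγpos : 0 < γ := by positivity
    set A : Set ℝ := {s : ℝ | s ∈ B ∧ K < |s| ∧ |s| ≤ R} with hAdef
    have hAmeas : MeasurableSet A := by
      have : A = B ∩ ({s : ℝ | K < |s|} ∩ {s : ℝ | |s| ≤ R}) := by
        ext s; simp [hAdef, Set.mem_setOf_eq]; tauto
      rw [this]
      exact hB.inter ((measurableSet_lt measurable_const measurable_abs).inter
        (measurableSet_le measurable_abs measurable_const))
    have hAsub : A ⊆ Set.Icc (-R) R := by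
      intro s hs; exact abs_le.1 hs.2.2
    have hptle : ∀ s ∈ A, Real.exp (-γ * f n s) ≤ Real.exp (-γ * m) := by
      intro s hs
      have h1 : m ≤ P2k l k s := hmle s hs.2.1
      have h2 : P2k l k s ≤ f n s := hfn s (by
        have := abs_le.1 hs.2.2
        exact ⟨by linarith [this.1], this.2⟩)
      exact Real.exp_le_exp.2 (by nlinarith)
    have hAfin : volume A ≤ ENNReal.ofReal (2 * R) := by
      calc volume A ≤ volume (Set.Icc (-R) R) := measure_mono hAsub
        _ = ENNReal.ofReal (R - (-R)) := by rw [Real.volume_Icc]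
        _ = ENNReal.ofReal (2 * R) := by ring_nf
    have hint : IntegrableOn (fun s => Real.exp (-γ * f n s)) A := by
      refine Integrable.mono' (g := fun _ => Real.exp (-γ * m)) (integrableOn_const ?_)
        ((Real.measurable_exp.comp ((hf n).const_mul (-γ))).aestronglyMeasurable)
        ?_
      · exact (lt_of_le_of_lt hAfin ENNReal.ofReal_lt_top).ne
      · refine (ae_restrict_iff' hAmeas).2 (Filter.Eventually.of_forall fun s hs => ?_)
        rw [Real.norm_eq_abs, abs_of_pos (Real.exp_pos _)]
        exact hptle s hs
    have hintle : ∫ s in A, Real.exp (-γ * f n s) ≤ Real.exp (-γ * m) * (2 * R) := by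
      calc ∫ s in A, Real.exp (-γ * f n s) ≤ ∫ _ in A, Real.exp (-γ * m) :=
            setIntegral_mono_on hint (integrableOn_const
              ((lt_of_le_of_lt hAfin ENNReal.ofReal_lt_top).ne)) hAmeas hptle
        _ = (volume A).toReal * Real.exp (-γ * m) := by
            rw [setIntegral_const]; simp [smul_eq_mul]; rfl
        _ ≤ (2 * R) * Real.exp (-γ * m) := by
            refine mul_le_mul_of_nonneg_right ?_ (Real.exp_pos _).le
            rw [← ENNReal.toReal_ofReal (by positivity : (0:ℝ) ≤ 2 * R)]
            exact ENNReal.toReal_mono ENNReal.ofReal_ne_top hAfin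
        _ = Real.exp (-γ * m) * (2 * R) := mul_comm _ _
    have hCpos : 0 < Real.exp (-γ * m) * (2 * R) := by positivity
    have helog : elog (ENNReal.ofReal (∫ s in A, Real.exp (-γ * f n s))) ≤
        ((Real.log (Real.exp (-γ * m) * (2 * R)) : ℝ) : EReal) :=
      elog_ofReal_le hintle hCpos
    have hlogeq : Real.log (Real.exp (-γ * m) * (2 * R)) = -γ * m + Real.log (2 * R) := by
      rw [Real.log_mul (Real.exp_ne_zero _) (by positivity), Real.log_exp]
    have := ereal_mul_le (c := γ⁻¹) (by positivity) helog
    refine le_trans this ?_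
    rw [hlogeq]
    have : γ⁻¹ * (-γ * m + Real.log (2 * R)) = g n := by
      rw [hgdef]
      field_simp
      simp only [hγdef, hRdef]; ring
    rw [this]
  -- limit of g
  have hg_tendsto : Tendsto g atTop (𝓝 (-m)) := by
    have h0 : Tendsto (fun n : ℕ => ((n : ℝ) ^ β)⁻¹ * Real.log (2 * (a * (n : ℝ) ^ (1 - α))))
        atTop (𝓝 0) := by
      have hlo : Tendsto (fun x : ℝ => Real.log x / x ^ β) atTop (𝓝 0) :=
        (isLittleO_log_rpow_atTop hβpos).tendsto_div_nhds_zero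
      have hneg : Tendsto (fun x : ℝ => x ^ (-β)) atTop (𝓝 0) := tendsto_rpow_neg_atTop hβpos
      have hnat : Tendsto (fun n : ℕ => (n : ℝ)) atTop atTop := tendsto_natCast_atTop_atTop
      have t1 : Tendsto (fun n : ℕ => Real.log (2 * a) * ((n : ℝ) ^ β)⁻¹) atTop (𝓝 0) := by
        have : Tendsto (fun n : ℕ => ((n : ℝ) ^ β)⁻¹) atTop (𝓝 0) := by
          refine (hneg.comp hnat).congr' ?_
          filter_upwards [eventually_ge_atTop 1] with n hn
          rw [Function.comp_apply, Real.rpow_neg (by positivity)]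
        simpa using this.const_mul (Real.log (2 * a))
      have t2 : Tendsto (fun n : ℕ => (1 - α) * (Real.log (n : ℝ) / (n : ℝ) ^ β)) atTop (𝓝 0) := by
        simpa using (hlo.comp hnat).const_mul (1 - α)
      have heq : ∀ᶠ n : ℕ in atTop,
          ((n : ℝ) ^ β)⁻¹ * Real.log (2 * (a * (n : ℝ) ^ (1 - α))) =
            Real.log (2 * a) * ((n : ℝ) ^ β)⁻¹ + (1 - α) * (Real.log (n : ℝ) / (n : ℝ) ^ β) := by
        filter_upwards [eventually_ge_atTop 1] with n hn
        have hnpos : (0 : ℝ) < (n : ℝ) := by exact_mod_cast hn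
        have : Real.log (2 * (a * (n : ℝ) ^ (1 - α))) =
            Real.log (2 * a) + (1 - α) * Real.log (n : ℝ) := by
          rw [show 2 * (a * (n : ℝ) ^ (1 - α)) = (2 * a) * (n : ℝ) ^ (1 - α) by ring,
            Real.log_mul (by positivity) (by positivity), Real.log_rpow hnpos]
        rw [this]
        ring
      have := (t1.add t2)
      simp only [add_zero] at this
      exact Tendsto.congr' (EventuallyEq.symm heq) (by simpa using this)
    simpa using (tendsto_const_nhds (x := -m)).add h0
  have hg_tendsto' : Tendsto (fun n => ((g n : ℝ) : EReal)) atTop (𝓝 ((-m : ℝ) : EReal)) :=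
    EReal.tendsto_coe.2 hg_tendsto
  calc limsup (fun n : ℕ => ((((n : ℝ) ^ β)⁻¹ : ℝ) : EReal) *
          elog (ENNReal.ofReal
            (∫ s in {s : ℝ | s ∈ B ∧ K < |s| ∧ |s| ≤ a * (n : ℝ) ^ (1 - α)},
              Real.exp (-(n : ℝ) ^ β * f n s)))) atTop
      ≤ limsup (fun n => ((g n : ℝ) : EReal)) atTop := limsup_le_limsup hev
    _ = ((-m : ℝ) : EReal) := hg_tendsto'.limsup_eq
    _ = -(J) := by rw [← hm]; exact_mod_cast EReal.coe_neg m
end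
end

section
/- Suppose ν has a finite absolute first moment. Then the set of global minima of G is non-empty and finite; in particular G attains its infimum over ℝ at finitely many points. -/
open MeasureTheory ProbabilityTheory Real Filter Topology
open scoped ENNReal NNReal

noncomputable section

namespace RFCWAux
lemma cosh_decomp (x y : ℝ) : Complex.cosh (x + y * Complex.I)
    = (Real.cosh x * Real.cos y : ℝ) + (Real.sinh x * Real.sin y : ℝ) * Complex.I := by
  rw [Complex.cosh_add, Complex.cosh_mul_I, Complex.sinh_mul_I]
  push_cast
  ring

lemma sinh_decomp (x y : ℝ) : Complex.sinh (x + y * Complex.I)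
    = (Real.sinh x * Real.cos y : ℝ) + (Real.cosh x * Real.sin y : ℝ) * Complex.I := by
  rw [Complex.sinh_add, Complex.cosh_mul_I, Complex.sinh_mul_I]
  push_cast
  ring

lemma cosh_re' (z : ℂ) : (Complex.cosh z).re = Real.cosh z.re * Real.cos z.im := by
  conv_lhs => rw [← Complex.re_add_im z]
  rw [cosh_decomp]
  simp [Complex.cos_ofReal_re]

lemma norm_cosh_sq (z : ℂ) :
    ‖Complex.cosh z‖ ^ 2 = Real.cos z.im ^ 2 + Real.sinh z.re ^ 2 := by
  conv_lhs => rw [← Complex.re_add_im z]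
  rw [cosh_decomp, Complex.sq_norm, Complex.normSq_add_mul_I]
  have h1 := Real.sin_sq_add_cos_sq z.im
  have h2 := Real.cosh_sq z.re
  nlinarith

lemma norm_sinh_sq (z : ℂ) :
    ‖Complex.sinh z‖ ^ 2 = Real.sin z.im ^ 2 + Real.sinh z.re ^ 2 := by
  conv_lhs => rw [← Complex.re_add_im z]
  rw [sinh_decomp, Complex.sq_norm, Complex.normSq_add_mul_I]
  have h1 := Real.sin_sq_add_cos_sq z.im
  have h2 := Real.cosh_sq z.re
  nlinarith

lemma cos_sq_half (z : ℂ) (him : |z.im| ≤ π / 4) : (1:ℝ)/2 ≤ Real.cos z.im ^ 2 := by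
  have hc : 0 ≤ Real.cos (2 * z.im) := by
    apply Real.cos_nonneg_of_mem_Icc
    have := abs_le.mp him
    constructor <;> [linarith [this.1]; linarith [this.2]]
  rw [Real.cos_sq]
  linarith

lemma cosh_re_pos (z : ℂ) (him : |z.im| ≤ π / 4) : 0 < (Complex.cosh z).re := by
  rw [cosh_re']
  have h4 : π / 4 < π / 2 := by linarith [Real.pi_pos]
  have := abs_le.mp him
  have hcos : 0 < Real.cos z.im :=
    Real.cos_pos_of_mem_Ioo ⟨by linarith [this.1], by linarith [this.2]⟩
  exact mul_pos (Real.cosh_pos _) hcos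

lemma cosh_slit (z : ℂ) (him : |z.im| ≤ π / 4) : Complex.cosh z ∈ Complex.slitPlane :=
  Complex.mem_slitPlane_iff.mpr (Or.inl (cosh_re_pos z him))

lemma cosh_ne_zero' (z : ℂ) (him : |z.im| ≤ π / 4) : Complex.cosh z ≠ 0 := by
  intro h
  have := cosh_re_pos z him
  rw [h] at this
  simp at this

lemma norm_tanh_le (z : ℂ) (him : |z.im| ≤ π / 4) : ‖Complex.tanh z‖ ≤ 1 := by
  rw [Complex.tanh_eq_sinh_div_cosh, norm_div]
  have h1 := norm_cosh_sq z
  have h2 := norm_sinh_sq z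
  have h3 := cos_sq_half z him
  have hsin : Real.sin z.im ^ 2 ≤ Real.cos z.im ^ 2 := by
    have := Real.sin_sq_add_cos_sq z.im
    linarith
  have hcpos : 0 < ‖Complex.cosh z‖ := by
    rcases (norm_nonneg (Complex.cosh z)).lt_or_eq with h | h
    · exact h
    · exfalso; nlinarith [sq_nonneg (Real.sinh z.re)]
  rw [div_le_one hcpos]
  nlinarith [norm_nonneg (Complex.sinh z), norm_nonneg (Complex.cosh z)]

lemma Real.cosh_le_exp_abs (t : ℝ) : Real.cosh t ≤ Real.exp |t| := by
  rw [Real.cosh_eq]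
  have h1 : Real.exp t ≤ Real.exp |t| := Real.exp_le_exp.mpr (le_abs_self t)
  have h2 : Real.exp (-t) ≤ Real.exp |t| := Real.exp_le_exp.mpr (neg_le_abs t)
  linarith

lemma norm_log_cosh_le (z : ℂ) (him : |z.im| ≤ π / 4) :
    ‖Complex.log (Complex.cosh z)‖ ≤ |z.re| + 1 + π := by
  set u := Complex.cosh z with hu
  have habs : ‖Complex.log u‖ ≤ |(Complex.log u).re| + |(Complex.log u).im| := by
    exact Complex.norm_le_abs_re_add_abs_im _
  rw [Complex.log_re, Complex.log_im] at habs
  have harg : |u.arg| ≤ π := Complex.abs_arg_le_pi u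
  have hsq := norm_cosh_sq z
  have hlow : (1:ℝ)/2 ≤ ‖u‖ := by
    have h3 := cos_sq_half z him
    nlinarith [norm_nonneg u, sq_nonneg (Real.sinh z.re)]
  have hupp : ‖u‖ ≤ Real.exp |z.re| := by
    have h4 : ‖u‖ ^ 2 ≤ Real.cosh z.re ^ 2 := by
      have := Real.cosh_sq z.re
      have := Real.sin_sq_add_cos_sq z.im
      nlinarith [Real.sin_sq_add_cos_sq z.im, Real.cosh_sq z.re]
    have h5 : ‖u‖ ≤ Real.cosh z.re := by
      nlinarith [norm_nonneg u, Real.cosh_pos z.re]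
    exact h5.trans (Real.cosh_le_exp_abs z.re)
  have hupos : (0:ℝ) < ‖u‖ := by linarith
  have hlog1 : Real.log ‖u‖ ≤ |z.re| := by
    calc Real.log ‖u‖ ≤ Real.log (Real.exp |z.re|) :=
          Real.log_le_log hupos hupp
      _ = |z.re| := Real.log_exp _
  have hlog2 : -1 ≤ Real.log ‖u‖ := by
    have : Real.log (1/2 : ℝ) ≤ Real.log ‖u‖ := Real.log_le_log (by norm_num) hlow
    have h2 : Real.log (1/2 : ℝ) = - Real.log 2 := by
      rw [one_div, Real.log_inv]
    have := Real.log_two_lt_d9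
    linarith
  have : |Real.log ‖u‖| ≤ |z.re| + 1 := by
    rw [abs_le]
    constructor
    · linarith [abs_nonneg z.re]
    · linarith
  linarith


variable {β : ℝ} {ν : Measure ℝ}

/-- The complexified integral function. -/
def Fc (β : ℝ) (ν : Measure ℝ) (z : ℂ) : ℂ :=
  ∫ h : ℝ, Complex.log (Complex.cosh (β * (z + h))) ∂ν

lemma im_aux (z : ℂ) (h : ℝ) : ((β : ℂ) * (z + (h : ℂ))).im = β * z.im := by simp

lemma re_aux (z : ℂ) (h : ℝ) : ((β : ℂ) * (z + (h : ℂ))).re = β * (z.re + h) := by simp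

lemma strip_mem (hβ : 0 < β) (z : ℂ) (hz : |z.im| ≤ π / (4 * β)) (h : ℝ) :
    |((β : ℂ) * (z + (h : ℂ))).im| ≤ π / 4 := by
  rw [im_aux, abs_mul, abs_of_pos hβ]
  calc β * |z.im| ≤ β * (π / (4 * β)) := by
        exact mul_le_mul_of_nonneg_left hz hβ.le
    _ = π / 4 := by field_simp

lemma cont_logcosh (hβ : 0 < β) (z : ℂ) (hz : |z.im| ≤ π / (4 * β)) :
    Continuous (fun h : ℝ => Complex.log (Complex.cosh ((β : ℂ) * (z + (h : ℂ))))) := by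
  have hinner : Continuous fun h : ℝ => Complex.cosh ((β : ℂ) * (z + (h : ℂ))) := by
    apply Complex.continuous_cosh.comp
    continuity
  rw [continuous_iff_continuousAt]
  intro h₀
  exact hinner.continuousAt.clog (cosh_slit _ (strip_mem hβ z hz h₀))

lemma cont_tanh (hβ : 0 < β) (z : ℂ) (hz : |z.im| ≤ π / (4 * β)) :
    Continuous (fun h : ℝ => (β : ℂ) * Complex.tanh ((β : ℂ) * (z + (h : ℂ)))) := by
  have hinner : Continuous fun h : ℝ => (β : ℂ) * (z + (h : ℂ)) := by continuity
  have h1 : Continuous fun h : ℝ => Complex.tanh ((β : ℂ) * (z + (h : ℂ))) := by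
    have := (Complex.continuous_sinh.comp hinner).div (Complex.continuous_cosh.comp hinner)
      (fun h => cosh_ne_zero' _ (strip_mem hβ z hz h))
    apply this.congr
    intro h
    rw [Complex.tanh_eq_sinh_div_cosh]
    rfl
  exact continuous_const.mul h1

lemma integrable_logcosh (hβ : 0 < β) [IsProbabilityMeasure ν]
    (hmom : Integrable (fun x : ℝ => |x|) ν) (z : ℂ) (hz : |z.im| ≤ π / (4 * β)) :
    Integrable (fun h : ℝ => Complex.log (Complex.cosh ((β : ℂ) * (z + (h : ℂ))))) ν := by
  apply Integrable.mono' ((hmom.const_mul β).add (integrable_const (β * |z.re| + 1 + π)))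
    (cont_logcosh hβ z hz).aestronglyMeasurable
  refine ae_of_all _ fun h => ?_
  have h1 := norm_log_cosh_le _ (strip_mem hβ z hz h)
  rw [re_aux] at h1
  have h2 : |β * (z.re + h)| ≤ β * |h| + β * |z.re| := by
    rw [abs_mul, abs_of_pos hβ]
    have := abs_add_le z.re h
    nlinarith [abs_nonneg z.re, abs_nonneg h, abs_nonneg (z.re + h)]
  calc ‖Complex.log (Complex.cosh ((β : ℂ) * (z + (h : ℂ))))‖ ≤ |β * (z.re + h)| + 1 + π := h1
    _ ≤ β * |h| + (β * |z.re| + 1 + π) := by linarith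

lemma hasDerivAt_Fc (hβ : 0 < β) [IsProbabilityMeasure ν]
    (hmom : Integrable (fun x : ℝ => |x|) ν) (x₀ : ℂ) (hx₀ : |x₀.im| < π / (4 * β)) :
    HasDerivAt (Fc β ν)
      (∫ h : ℝ, (β : ℂ) * Complex.tanh ((β : ℂ) * (x₀ + (h : ℂ))) ∂ν) x₀ := by
  have hεpos : 0 < π / (4 * β) - |x₀.im| := by linarith
  have hball : ∀ z ∈ Metric.ball x₀ (π / (4 * β) - |x₀.im|), |z.im| ≤ π / (4 * β) := by
    intro z hz
    have h1 : |z.im - x₀.im| ≤ ‖z - x₀‖ := by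
      simpa using Complex.abs_im_le_norm (z - x₀)
    have h2 : ‖z - x₀‖ < π / (4 * β) - |x₀.im| := by
      rw [Metric.mem_ball, Complex.dist_eq] at hz; exact hz
    have := abs_sub_abs_le_abs_sub z.im x₀.im
    have h3 : |z.im| ≤ |x₀.im| + |z.im - x₀.im| := by
      have := abs_add_le (z.im - x₀.im) x₀.im
      simpa [sub_add_cancel, add_comm] using this
    linarith
  have := hasDerivAt_integral_of_dominated_loc_of_deriv_le (μ := ν)
    (F := fun (z : ℂ) (h : ℝ) => Complex.log (Complex.cosh ((β : ℂ) * (z + (h : ℂ)))))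
    (F' := fun (z : ℂ) (h : ℝ) => (β : ℂ) * Complex.tanh ((β : ℂ) * (z + (h : ℂ))))
    (x₀ := x₀) (bound := fun _ => β) (Metric.ball_mem_nhds x₀ hεpos)
    ?_ ?_ ?_ ?_ ?_ ?_
  · exact this.2
  · filter_upwards [Metric.ball_mem_nhds x₀ hεpos] with z hz
    exact (cont_logcosh hβ z (hball z hz)).aestronglyMeasurable
  · exact integrable_logcosh hβ hmom x₀ hx₀.le
  · exact (cont_tanh hβ x₀ hx₀.le).aestronglyMeasurable
  · refine ae_of_all _ fun h z hz => ?_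
    rw [norm_mul, Complex.norm_real, Real.norm_eq_abs, abs_of_pos hβ]
    have := norm_tanh_le _ (strip_mem hβ z (hball z hz) h)
    nlinarith
  · exact integrable_const β
  · refine ae_of_all _ fun h z hz => ?_
    have hs := strip_mem hβ z (hball z hz) h
    have h1 : HasDerivAt (fun z : ℂ => (β : ℂ) * (z + (h : ℂ))) (β : ℂ) z := by
      simpa using ((hasDerivAt_id z).add_const ((h : ℂ))).const_mul (β : ℂ)
    have h2 := (Complex.hasDerivAt_cosh ((β : ℂ) * (z + (h : ℂ)))).comp z h1
    have h3 := (Complex.hasDerivAt_log (cosh_slit _ hs)).comp z h2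
    refine h3.congr_deriv ?_
    simp only [Complex.tanh_eq_sinh_div_cosh]
    field_simp [cosh_ne_zero' _ hs]


lemma key_real [IsProbabilityMeasure ν] (x : ℝ) :
    Fc β ν x = ((∫ h, Real.log (Real.cosh (β * (x + h))) ∂ν : ℝ) : ℂ) := by
  have heq : (fun h : ℝ => Complex.log (Complex.cosh ((β:ℂ) * ((x:ℂ) + (h:ℂ)))))
      = fun h : ℝ => ((Real.log (Real.cosh (β * (x + h))) : ℝ) : ℂ) := by
    funext h
    rw [Complex.ofReal_log (Real.cosh_pos _).le]
    congr 1
    push_cast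
    ring_nf
  rw [Fc, heq]
  exact integral_ofReal

lemma analyticG (hβ : 0 < β) [IsProbabilityMeasure ν]
    (hmom : Integrable (fun x : ℝ => |x|) ν) :
    AnalyticOnNhd ℝ (G β ν) Set.univ := by
  set U : Set ℂ := {z : ℂ | |z.im| < π / (4 * β)} with hU
  have hUopen : IsOpen U := isOpen_lt (Complex.continuous_im.abs) continuous_const
  have hdiff : DifferentiableOn ℂ (Fc β ν) U := fun z hz =>
    ((hasDerivAt_Fc hβ hmom z hz).differentiableAt).differentiableWithinAt
  have hFA : AnalyticOnNhd ℂ (Fc β ν) U := hdiff.analyticOnNhd hUopen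
  have hGeq : G β ν = fun x : ℝ => β / 2 * x ^ 2 - (Fc β ν x).re := by
    funext x
    rw [G, key_real x]
    simp
  rw [hGeq]
  intro x _
  have hmem : ((x : ℝ) : ℂ) ∈ U := by
    simp only [hU, Set.mem_setOf_eq, Complex.ofReal_im, abs_zero]
    positivity
  have h1 : AnalyticAt ℝ (Fc β ν) (x : ℂ) := (hFA _ hmem).restrictScalars
  have h2 : AnalyticAt ℝ (fun t : ℝ => (t : ℂ)) x := Complex.ofRealCLM.analyticAt x
  have h3 : AnalyticAt ℝ (fun t : ℝ => Fc β ν (t : ℂ)) x := h1.comp h2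
  have h4 : AnalyticAt ℝ (fun t : ℝ => (Fc β ν (t : ℂ)).re) x :=
    (Complex.reCLM.analyticAt _).comp h3
  exact ((analyticAt_const.mul ((analyticAt_id).pow 2))).sub h4

lemma logcosh_le_abs (t : ℝ) : Real.log (Real.cosh t) ≤ |t| := by
  calc Real.log (Real.cosh t) ≤ Real.log (Real.exp |t|) :=
        Real.log_le_log (Real.cosh_pos t) (Real.cosh_le_exp_abs t)
    _ = |t| := Real.log_exp _

lemma integrable_real_logcosh [IsProbabilityMeasure ν] (hβ : 0 < β)
    (hmom : Integrable (fun x : ℝ => |x|) ν) (x : ℝ) :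
    Integrable (fun h : ℝ => Real.log (Real.cosh (β * (x + h)))) ν := by
  have hcont : Continuous fun h : ℝ => Real.log (Real.cosh (β * (x + h))) := by
    apply Continuous.log
    · continuity
    · exact fun h => (Real.cosh_pos _).ne'
  apply Integrable.mono' ((hmom.const_mul β).add (integrable_const (β * |x|)))
    hcont.aestronglyMeasurable
  refine ae_of_all _ fun h => ?_
  rw [Real.norm_eq_abs, abs_of_nonneg (Real.log_nonneg (Real.one_le_cosh _))]
  calc Real.log (Real.cosh (β * (x + h))) ≤ |β * (x + h)| := logcosh_le_abs _
    _ ≤ β * |h| + β * |x| := by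
        rw [abs_mul, abs_of_pos hβ]
        nlinarith [abs_add_le x h, abs_nonneg x, abs_nonneg h]

lemma G_lower [IsProbabilityMeasure ν] (hβ : 0 < β)
    (hmom : Integrable (fun x : ℝ => |x|) ν) (x : ℝ) :
    β / 2 * |x| ^ 2 - β * |x| - β * (∫ h, |h| ∂ν) ≤ G β ν x := by
  rw [G, sq_abs]
  have h1 : (∫ h, Real.log (Real.cosh (β * (x + h))) ∂ν)
      ≤ ∫ h, (β * |h| + β * |x|) ∂ν := by
    apply integral_mono (integrable_real_logcosh hβ hmom x)
      ((hmom.const_mul β).add (integrable_const _))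
    intro h
    calc Real.log (Real.cosh (β * (x + h))) ≤ |β * (x + h)| := logcosh_le_abs _
      _ ≤ β * |h| + β * |x| := by
          rw [abs_mul, abs_of_pos hβ]
          nlinarith [abs_add_le x h, abs_nonneg x, abs_nonneg h]
  have h2 : (∫ h, (β * |h| + β * |x|) ∂ν) = β * (∫ h, |h| ∂ν) + β * |x| := by
    rw [integral_add (hmom.const_mul β) (integrable_const _), integral_const_mul]
    simp
  linarith

end RFCWAux

/-- The set of global minima of `G` is non-empty and finite. -/
theorem global_minima_nonempty_finite
    (β : ℝ) (hβ : 0 < β) (ν : Measure ℝ) [IsProbabilityMeasure ν]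
    (hmom : Integrable (fun x : ℝ => |x|) ν) :
    {m : ℝ | ∀ w : ℝ, G β ν m ≤ G β ν w}.Nonempty ∧
      {m : ℝ | ∀ w : ℝ, G β ν m ≤ G β ν w}.Finite := by
  classical
  have hGa : AnalyticOnNhd ℝ (G β ν) Set.univ := RFCWAux.analyticG hβ hmom
  have hGcont : Continuous (G β ν) := continuousOn_univ.mp hGa.continuousOn
  have hq : Tendsto (fun x : ℝ => β / 2 * |x| ^ 2 - β * |x| - β * (∫ h, |h| ∂ν))
      (cocompact ℝ) atTop := by
    have hφ : Tendsto (fun t : ℝ => β / 2 * t ^ 2 - β * t - β * (∫ h, |h| ∂ν))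
        atTop atTop := by
      have h1 : Tendsto (fun t : ℝ => β / 2 * t - β) atTop atTop :=
        tendsto_atTop_add_const_right _ (-β)
          (Tendsto.const_mul_atTop (by positivity) tendsto_id)
      have h2 : Tendsto (fun t : ℝ => t * (β / 2 * t - β)) atTop atTop :=
        tendsto_id.atTop_mul_atTop₀ h1
      have h3 := tendsto_atTop_add_const_right atTop (-(β * (∫ h, |h| ∂ν))) h2
      exact h3.congr fun t => by ring
    have habs : Tendsto (fun x : ℝ => |x|) (cocompact ℝ) atTop := by
      exact (tendsto_norm_cocompact_atTop (E := ℝ)).congr fun x => Real.norm_eq_abs x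
    exact hφ.comp habs
  have hGtop : Tendsto (G β ν) (cocompact ℝ) atTop :=
    tendsto_atTop_mono (fun x => RFCWAux.G_lower hβ hmom x) hq
  obtain ⟨m, hm⟩ := hGcont.exists_forall_le hGtop
  refine ⟨⟨m, hm⟩, ?_⟩
  by_contra hinf
  replace hinf : Set.Infinite {m : ℝ | ∀ w : ℝ, G β ν m ≤ G β ν w} := hinf
  have hev : ∀ᶠ x in cocompact ℝ, G β ν m + 1 ≤ G β ν x :=
    hGtop.eventually (eventually_ge_atTop _)
  obtain ⟨K, hK, hKsub⟩ := Filter.mem_cocompact.mp hev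
  have hSsub : {m : ℝ | ∀ w : ℝ, G β ν m ≤ G β ν w} ⊆ K := by
    intro x hx
    by_contra hxK
    have h1 : G β ν m + 1 ≤ G β ν x := hKsub hxK
    have h2 : G β ν x ≤ G β ν m := hx m
    linarith
  obtain ⟨z₀, hz₀K, hacc⟩ := hinf.exists_accPt_of_subset_isCompact hK hSsub
  obtain ⟨y, hy⟩ : ∃ y, y ∉ K := by
    by_contra hy
    push_neg at hy
    exact hK.ne_univ (Set.eq_univ_of_forall hy)
  have hyG : G β ν m + 1 ≤ G β ν y := hKsub hy
  have hfreq : ∃ᶠ z in 𝓝[≠] z₀, (fun z => G β ν z - G β ν m) z = 0 := by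
    have hne : (𝓝[≠] z₀ ⊓ 𝓟 {m : ℝ | ∀ w : ℝ, G β ν m ≤ G β ν w}).NeBot := hacc
    have h1 : ∃ᶠ z in 𝓝[≠] z₀, z ∈ {m : ℝ | ∀ w : ℝ, G β ν m ≤ G β ν w} :=
      Filter.frequently_mem_iff_neBot.mpr hne
    refine h1.mono fun z hz => ?_
    have h2 : G β ν z ≤ G β ν m := hz m
    have h3 : G β ν m ≤ G β ν z := hm z
    simp only
    linarith
  have hzero := (hGa.sub analyticOnNhd_const).eqOn_zero_of_preconnected_of_frequently_eq_zero
      isPreconnected_univ (Set.mem_univ z₀) hfreq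
  have hy0 := hzero (Set.mem_univ y)
  simp only [Pi.sub_apply, Pi.zero_apply, sub_eq_zero] at hy0
  linarith
end
end
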